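/- arXiv:2002.05710 — 6 statements merged into one kernel-verified Lean document; each statement's English description precedes it below -/
import Mathlib

section
/- Let T be a weighted tree, S a set of marked vertices, and C the compressed path tree of T with respect to S, where each edge of C is weighted by the maximum edge weight on the corresponding path in T. Then for every pair of marked vertices u, v in S, the maximum edge weight on the u-v path in C equals the maximum edge weight on the u-v path in T. -/
open SimpleGraph

variable {V : Type*}

/-- `e` is an edge lying on some path between two marked vertices of `S` in `T`. -/
def SPathEdge (T : SimpleGraph V) (S : Set V) (e : Sym2 V) : Prop :=
  ∃ a ∈ S, ∃ b ∈ S, ∃ p : T.Walk a b, p.IsPath ∧ e ∈ p.edges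

/-- `v` is a branching vertex of the union of all pairwise `S`-paths in `T`:
it has degree at least 3 in that union. -/
def Branching (T : SimpleGraph V) (S : Set V) (v : V) : Prop :=
  3 ≤ Set.ncard {x : V | SPathEdge T S s(v, x)}

/-- The vertices of the compressed path tree: the marked vertices together with the
branching vertices of the union of pairwise `S`-paths. -/
def cptVerts (T : SimpleGraph V) (S : Set V) : Set V :=
  S ∪ {v : V | Branching T S v}

/-- `C` is the compressed path tree of `T` with respect to the marked set `S`:
its vertices are `cptVerts T S`, and two of them are adjacent iff the path between
them in `T` contains no other vertex of `cptVerts T S`. -/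
def IsCPT (T : SimpleGraph V) (S : Set V) (C : SimpleGraph V) : Prop :=
  ∀ a b : V, C.Adj a b ↔
    a ∈ cptVerts T S ∧ b ∈ cptVerts T S ∧ a ≠ b ∧
      ∃ p : T.Walk a b, p.IsPath ∧
        ∀ x ∈ p.support, x ∈ cptVerts T S → x = a ∨ x = b

/-- `m` is the maximum edge weight on a (the) path from `u` to `v` in `T`. -/
def PathMaxW (T : SimpleGraph V) (w : Sym2 V → ℝ) (u v : V) (m : ℝ) : Prop :=
  ∃ p : T.Walk u v, p.IsPath ∧ (∃ e ∈ p.edges, w e = m) ∧ ∀ e ∈ p.edges, w e ≤ m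

variable {T : SimpleGraph V} {S : Set V}

lemma path_eq (hT : T.IsTree) {a b : V} {p q : T.Walk a b} (hp : p.IsPath) (hq : q.IsPath) :
    p = q := (hT.existsUnique_path a b).unique hp hq

lemma path_edges_subset_walk (hT : T.IsTree) {a b : V} {p : T.Walk a b} (hp : p.IsPath)
    (W : T.Walk a b) : p.edges ⊆ W.edges := by
  classical
  have h := path_eq hT hp W.bypass_isPath
  exact h ▸ W.edges_bypass_subset

lemma cpt_on_spath {a : V} (ha : a ∈ cptVerts T S) :
    ∃ s1 ∈ S, ∃ s2 ∈ S, ∃ r : T.Walk s1 s2, r.IsPath ∧ a ∈ r.support := by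
  rcases ha with ha | ha
  · exact ⟨a, ha, a, ha, Walk.nil, Walk.IsPath.nil, by simp⟩
  · have hne : {x : V | SPathEdge T S s(a, x)}.Nonempty := by
      by_contra h
      rw [Set.not_nonempty_iff_eq_empty] at h
      have h3 := ha
      rw [Set.mem_setOf_eq, Branching, h, Set.ncard_empty] at h3
      omega
    obtain ⟨x, hx⟩ := hne
    obtain ⟨s1, h1, s2, h2, r, hr, he⟩ := hx
    exact ⟨s1, h1, s2, h2, r, hr, r.fst_mem_support_of_mem_edges he⟩

lemma spath_cover [Fintype V] (hT : T.IsTree) {a b : V} (ha : a ∈ cptVerts T S)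
    (hb : b ∈ cptVerts T S) {p : T.Walk a b} (hp : p.IsPath) :
    ∀ e ∈ p.edges, SPathEdge T S e := by
  classical
  obtain ⟨s1, hs1, s2, hs2, r, hr, har⟩ := cpt_on_spath ha
  obtain ⟨t1, ht1, t2, ht2, r', hr', hbr⟩ := cpt_on_spath hb
  obtain ⟨Wm⟩ := hT.isConnected.preconnected s1 t1
  intro e he
  have hW : e ∈ (((r.takeUntil a har).reverse.append Wm.bypass).append (r'.takeUntil b hbr)).edges :=
    path_edges_subset_walk hT hp _ he
  rw [Walk.edges_append, Walk.edges_append, Walk.edges_reverse, List.mem_append,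
    List.mem_append, List.mem_reverse] at hW
  rcases hW with (hW | hW) | hW
  · exact ⟨s1, hs1, s2, hs2, r, hr, r.edges_takeUntil_subset har hW⟩
  · exact ⟨s1, hs1, t1, ht1, Wm.bypass, Wm.bypass_isPath, hW⟩
  · exact ⟨t1, ht1, t2, ht2, r', hr', r'.edges_takeUntil_subset hbr hW⟩

lemma claimA [Fintype V] {c : V} (hc : c ∈ cptVerts T S) :
    ∀ {x a : V} (P : T.Walk x a), a ∈ cptVerts T S → P.IsPath →
    ∀ {y : V} (Q : T.Walk x c), Q.IsPath →
      T.Adj x y → y ∉ P.support → y ∉ Q.support → SPathEdge T S s(x, y) →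
      (∀ e ∈ P.edges, SPathEdge T S e) → (∀ e ∈ Q.edges, SPathEdge T S e) →
      (∀ z ∈ P.support, z ∈ cptVerts T S → z = a) →
      (∀ z ∈ Q.support, z ∈ cptVerts T S → z = c) → a = c := by
  intro x a P
  induction P with
  | nil =>
    intro ha _ y Q _ _ _ _ _ _ _ _ hQc
    exact hQc _ Q.start_mem_support ha
  | @cons x x1 a hadj p' ih =>
    intro ha hP y Q hQ hxy hyP hyQ hyS hPS hQS hPc hQc
    cases Q with
    | nil =>
      exact (hPc c (Walk.start_mem_support _) hc).symm
    | @cons _ x2 _ hadj2 q' =>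
      rw [Walk.cons_isPath_iff] at hP hQ
      by_cases h12 : x1 = x2
      · subst h12
        refine ih ha hP.1 q' hQ.1 hadj.symm hP.2 hQ.2
          (Sym2.eq_swap ▸ hPS s(x, x1) (by rw [Walk.edges_cons]; exact List.mem_cons_self))
          (fun e he => hPS e (by rw [Walk.edges_cons]; exact List.mem_cons_of_mem _ he))
          (fun e he => hQS e (by rw [Walk.edges_cons]; exact List.mem_cons_of_mem _ he))
          (fun z hz hzc => hPc z (by rw [Walk.support_cons]; exact List.mem_cons_of_mem _ hz) hzc)
          (fun z hz hzc => hQc z (by rw [Walk.support_cons]; exact List.mem_cons_of_mem _ hz) hzc)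
      · -- branching at x
        have hx1P : x1 ∈ (Walk.cons hadj p').support := by
          rw [Walk.support_cons]; exact List.mem_cons_of_mem _ p'.start_mem_support
        have hx2Q : x2 ∈ (Walk.cons hadj2 q').support := by
          rw [Walk.support_cons]; exact List.mem_cons_of_mem _ q'.start_mem_support
        have hx1y : x1 ≠ y := fun h => hyP (h ▸ hx1P)
        have hx2y : x2 ≠ y := fun h => hyQ (h ▸ hx2Q)
        have hsub : ({x1, x2, y} : Set V) ⊆ {z : V | SPathEdge T S s(x, z)} := by
          intro z hz
          rcases hz with rfl | rfl | rfl
          · exact hPS s(x, z) (by rw [Walk.edges_cons]; exact List.mem_cons_self)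
          · exact hQS s(x, z) (by rw [Walk.edges_cons]; exact List.mem_cons_self)
          · exact hyS
        have hb : Branching T S x := by
          rw [Branching]
          calc (3 : ℕ) = ({x1, x2, y} : Set V).ncard :=
                (Set.ncard_eq_three.mpr ⟨x1, x2, y, h12, hx1y, hx2y, rfl⟩).symm
            _ ≤ _ := Set.ncard_le_ncard hsub (Set.toFinite _)
        have hxcpt : x ∈ cptVerts T S := Or.inr hb
        have h1 : x = a := hPc x (Walk.start_mem_support _) hxcpt
        have h2 : x = c := hQc x (Walk.start_mem_support _) hxcpt
        rw [← h1, h2]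

lemma walk_split_at_edge {u v : V} (p : T.Walk u v) {e : Sym2 V} (he : e ∈ p.edges) :
    ∃ (x y : V) (h : T.Adj x y) (p1 : T.Walk u x) (p2 : T.Walk y v),
      e = s(x, y) ∧ p = p1.append (Walk.cons h p2) := by
  induction p with
  | nil => simp at he
  | cons h q ih =>
    rw [Walk.edges_cons, List.mem_cons] at he
    rcases he with rfl | he
    · exact ⟨_, _, h, Walk.nil, q, rfl, rfl⟩
    · obtain ⟨x, y, hxy, p1, p2, rfl, rfl⟩ := ih he
      exact ⟨x, y, hxy, Walk.cons h p1, p2, rfl, rfl⟩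

lemma side_conds {a b x y : V} (hxy : T.Adj x y) (p1 : T.Walk a x) (p2 : T.Walk y b)
    (hp : (p1.append (Walk.cons hxy p2)).IsPath)
    (hpc : ∀ z ∈ (p1.append (Walk.cons hxy p2)).support, z ∈ cptVerts T S → z = a ∨ z = b) :
    p1.reverse.IsPath ∧ p2.IsPath ∧ y ∉ p1.reverse.support ∧ x ∉ p2.support ∧
    (∀ z ∈ p1.reverse.support, z ∈ cptVerts T S → z = a) ∧
    (∀ z ∈ p2.support, z ∈ cptVerts T S → z = b) := by
  have hnd := hp.2
  rw [Walk.support_append, Walk.support_cons, List.tail_cons, List.nodup_append] at hnd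
  have hdisj : ∀ z ∈ p1.support, z ∉ p2.support := fun z hz hz2 => hnd.2.2 z hz z hz2 rfl
  have hmem1 : ∀ z ∈ p1.support, z ∈ (p1.append (Walk.cons hxy p2)).support := by
    intro z hz; rw [Walk.mem_support_append_iff]; exact Or.inl hz
  have hmem2 : ∀ z ∈ p2.support, z ∈ (p1.append (Walk.cons hxy p2)).support := by
    intro z hz; rw [Walk.mem_support_append_iff]
    exact Or.inr (by rw [Walk.support_cons]; exact List.mem_cons_of_mem _ hz)
  refine ⟨hp.of_append_left.reverse, (hp.of_append_right).of_cons, ?_, ?_, ?_, ?_⟩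
  · rw [Walk.support_reverse, List.mem_reverse]
    exact fun hy => hdisj y hy p2.start_mem_support
  · exact hdisj x p1.end_mem_support
  · intro z hz hzc
    rw [Walk.support_reverse, List.mem_reverse] at hz
    rcases hpc z (hmem1 z hz) hzc with h | h
    · exact h
    · exact absurd (h ▸ hz) (fun hb' => hdisj b hb' p2.end_mem_support)
  · intro z hz hzc
    rcases hpc z (hmem2 z hz) hzc with h | h
    · exact absurd (h ▸ hz) (hdisj a p1.start_mem_support)
    · exact h

lemma seg_eq [Fintype V] (hT : T.IsTree) {a b c d : V}
    (ha : a ∈ cptVerts T S) (hb : b ∈ cptVerts T S)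
    (hc : c ∈ cptVerts T S) (hd : d ∈ cptVerts T S)
    {p : T.Walk a b} (hp : p.IsPath) {q : T.Walk c d} (hq : q.IsPath)
    (hpc : ∀ z ∈ p.support, z ∈ cptVerts T S → z = a ∨ z = b)
    (hqc : ∀ z ∈ q.support, z ∈ cptVerts T S → z = c ∨ z = d)
    {e : Sym2 V} (hep : e ∈ p.edges) (heq : e ∈ q.edges) : s(a, b) = s(c, d) := by
  have hPS := spath_cover hT ha hb hp
  have hQS := spath_cover hT hc hd hq
  obtain ⟨x, y, hxy, p1, p2, he1, hpe⟩ := walk_split_at_edge p hep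
  obtain ⟨x', y', hxy', q1, q2, he2, hqe⟩ := walk_split_at_edge q heq
  subst hpe hqe
  have hedgeP : ∀ e' ∈ p1.reverse.edges, SPathEdge T S e' := by
    intro e' he'
    rw [Walk.edges_reverse, List.mem_reverse] at he'
    exact hPS e' (by rw [Walk.edges_append]; exact List.mem_append_left _ he')
  have hedgeP2 : ∀ e' ∈ p2.edges, SPathEdge T S e' := by
    intro e' he'
    refine hPS e' ?_
    rw [Walk.edges_append, Walk.edges_cons]
    exact List.mem_append_right _ (List.mem_cons_of_mem _ he')
  have hedgeQ : ∀ e' ∈ q1.reverse.edges, SPathEdge T S e' := by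
    intro e' he'
    rw [Walk.edges_reverse, List.mem_reverse] at he'
    exact hQS e' (by rw [Walk.edges_append]; exact List.mem_append_left _ he')
  have hedgeQ2 : ∀ e' ∈ q2.edges, SPathEdge T S e' := by
    intro e' he'
    refine hQS e' ?_
    rw [Walk.edges_append, Walk.edges_cons]
    exact List.mem_append_right _ (List.mem_cons_of_mem _ he')
  have heS : SPathEdge T S s(x, y) := he1 ▸ hPS e hep
  obtain ⟨hp1r, hp2, hyP, hxP, hPc1, hPc2⟩ := side_conds hxy p1 p2 hp hpc
  obtain ⟨hq1r, hq2, hyQ, hxQ, hQc1, hQc2⟩ := side_conds hxy' q1 q2 hq hqc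
  rw [he1] at he2
  rw [Sym2.eq_iff] at he2
  rcases he2 with ⟨rfl, rfl⟩ | ⟨rfl, rfl⟩
  · -- x' = x, y' = y
    have hac : a = c := claimA hc p1.reverse ha hp1r q1.reverse hq1r hxy hyP hyQ heS
      hedgeP hedgeQ hPc1 hQc1
    have hbd : b = d := claimA hd p2 hb hp2 q2 hq2 hxy.symm hxP hxQ (Sym2.eq_swap ▸ heS)
      hedgeP2 hedgeQ2 hPc2 hQc2
    rw [hac, hbd]
  · -- x = y', y = x'
    have had : a = d := claimA hd p1.reverse ha hp1r q2 hq2 hxy hyP hxQ heS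
      hedgeP hedgeQ2 hPc1 hQc2
    have hbc : b = c := claimA hc p2 hb hp2 q1.reverse hq1r hxy.symm hxP hyQ (Sym2.eq_swap ▸ heS)
      hedgeP2 hedgeQ hPc2 hQc1
    rw [had, hbc, Sym2.eq_swap]

lemma side_step {x y : V} {u u' : V} (h : T.Adj u u') (hne : s(u, u') ≠ s(x, y)) :
    (T \ fromEdgeSet {s(x, y)}).Adj u u' := by
  rw [sdiff_adj, fromEdgeSet_adj]
  exact ⟨h, fun hc => hne (by simpa using hc.1)⟩

lemma side_cover_aux {x y : V} :
    ∀ {z w : V} (_ : T.Walk z w),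
      ((T \ fromEdgeSet {s(x, y)}).Reachable x z ∨ (T \ fromEdgeSet {s(x, y)}).Reachable y z) →
      ((T \ fromEdgeSet {s(x, y)}).Reachable x w ∨ (T \ fromEdgeSet {s(x, y)}).Reachable y w) := by
  intro z w W
  induction W with
  | nil => exact id
  | @cons z z' w h q ih =>
    intro hz
    refine ih ?_
    by_cases he : s(z, z') = s(x, y)
    · rw [Sym2.eq_iff] at he
      rcases he with ⟨rfl, rfl⟩ | ⟨rfl, rfl⟩
      · exact Or.inr (Reachable.refl _)
      · exact Or.inl (Reachable.refl _)
    · rcases hz with hz | hz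
      · exact Or.inl (hz.trans (side_step h he).reachable)
      · exact Or.inr (hz.trans (side_step h he).reachable)

lemma side_cover (hcon : T.Connected) {x y : V} (z : V) :
    (T \ fromEdgeSet {s(x, y)}).Reachable x z ∨ (T \ fromEdgeSet {s(x, y)}).Reachable y z := by
  obtain ⟨W⟩ := hcon.preconnected x z
  exact side_cover_aux W (Or.inl (Reachable.refl _))

lemma reach_dichotomy (hT : T.IsTree) {x y : V} (hxy : T.Adj x y) (v : V) :
    ((T \ fromEdgeSet {s(x, y)}).Reachable x v ↔ ¬(T \ fromEdgeSet {s(x, y)}).Reachable y v) := by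
  have hbr : ¬(T \ fromEdgeSet {s(x, y)}).Reachable x y := by
    have h := hT.IsAcyclic
    rw [isAcyclic_iff_forall_adj_isBridge] at h
    exact isBridge_iff.mp (h hxy)
  constructor
  · intro hr hr'
    exact hbr (hr.trans hr'.symm)
  · intro hr
    rcases side_cover hT.isConnected (x := x) (y := y) v with hc | hc
    · exact hc
    · exact absurd hc hr

lemma reach_dichotomy' (hT : T.IsTree) {x y : V} (hxy : T.Adj x y) (v : V) :
    ((T \ fromEdgeSet {s(x, y)}).Reachable y v ↔ ¬(T \ fromEdgeSet {s(x, y)}).Reachable x v) := by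
  rw [iff_not_comm]
  exact reach_dichotomy hT hxy v

lemma cross_parity [DecidableEq V] (hT : T.IsTree) {x y : V} (hxy : T.Adj x y) :
    ∀ {u v : V} (W : T.Walk u v),
      ((T \ fromEdgeSet {s(x, y)}).Reachable u v ↔ Even (W.edges.count s(x, y))) := by
  intro u v W
  induction W with
  | nil => simpa using Reachable.refl _
  | @cons u u' v h q ih =>
    rw [Walk.edges_cons, List.count_cons]
    by_cases he : s(u, u') = s(x, y)
    · have hkey : (T \ fromEdgeSet {s(x, y)}).Reachable u v ↔
          ¬(T \ fromEdgeSet {s(x, y)}).Reachable u' v := by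
        rw [Sym2.eq_iff] at he
        rcases he with ⟨rfl, rfl⟩ | ⟨rfl, rfl⟩
        · exact reach_dichotomy hT hxy v
        · exact reach_dichotomy' hT hxy v
      rw [hkey, ih]
      simp [he, Nat.even_add_one]
    · have hadj := (side_step h he).reachable
      have : (s(u, u') == s(x, y)) = false := beq_eq_false_iff_ne.mpr he
      rw [this]
      simp only [Bool.false_eq_true, if_false, Nat.add_zero]
      rw [← ih]
      exact ⟨fun hr => hadj.symm.trans hr, fun hr => hadj.trans hr⟩

lemma mem_path_edges_of_count_one [DecidableEq V] (hT : T.IsTree) {x y u v : V}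
    (hxy : T.Adj x y) {W : T.Walk u v} (hW : W.edges.count s(x, y) = 1)
    (P : T.Walk u v) : s(x, y) ∈ P.edges := by
  have h1 : ¬(T \ fromEdgeSet {s(x, y)}).Reachable u v := by
    rw [cross_parity hT hxy W, hW]
    simp
  rw [cross_parity hT hxy P] at h1
  have hc : P.edges.count s(x, y) ≠ 0 := by
    intro h0; rw [h0] at h1; simp at h1
  exact List.count_pos_iff.mp (Nat.pos_of_ne_zero hc)


lemma buildW [Fintype V] [DecidableEq V] (hT : T.IsTree) {C : SimpleGraph V} (hC : IsCPT T S C)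
    {w wC : Sym2 V → ℝ} {m : ℝ}
    (hwC : ∀ a b : V, C.Adj a b → PathMaxW T w a b (wC s(a, b)))
    {a0 b0 : V} {p0 : T.Walk a0 b0} (hp0 : p0.IsPath)
    (ha0 : a0 ∈ cptVerts T S) (hb0 : b0 ∈ cptVerts T S)
    (hp0c : ∀ z ∈ p0.support, z ∈ cptVerts T S → z = a0 ∨ z = b0)
    {e0 : Sym2 V} (he0 : e0 ∈ p0.edges) :
    ∀ {u' v : V} (q : C.Walk u' v), q.IsPath → (∀ f ∈ q.edges, wC f ≤ m) →
    ∃ W : T.Walk u' v, (∀ e ∈ W.edges, w e ≤ m) ∧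
      W.edges.count e0 = (if s(a0, b0) ∈ q.edges then 1 else 0) := by
  intro u' v q
  induction q with
  | nil => intro _ _; exact ⟨Walk.nil, by simp, by simp⟩
  | @cons u' z v h q' ih =>
    intro hq hqle
    obtain ⟨hu'c, hzc, hne, pseg, hpseg, hsegc⟩ := (hC u' z).1 h
    obtain ⟨p', hp', hex, hmax⟩ := hwC u' z h
    have hpe : pseg = p' := path_eq hT hpseg hp'
    have hsegc' : ∀ x ∈ p'.support, x ∈ cptVerts T S → x = u' ∨ x = z := hpe ▸ hsegc
    have hle : wC s(u', z) ≤ m :=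
      hqle _ (by rw [Walk.edges_cons]; exact List.mem_cons_self)
    obtain ⟨W', hW'le, hW'cnt⟩ := ih hq.of_cons
      (fun f hf => hqle f (by rw [Walk.edges_cons]; exact List.mem_cons_of_mem _ hf))
    refine ⟨p'.append W', ?_, ?_⟩
    · intro e he
      rw [Walk.edges_append, List.mem_append] at he
      rcases he with he | he
      · exact le_trans (hmax e he) hle
      · exact hW'le e he
    · rw [Walk.edges_append, List.count_append, hW'cnt]
      by_cases hf0 : s(a0, b0) = s(u', z)
      · have hnotin : s(a0, b0) ∉ q'.edges := by
          have hnd := hq.isTrail.edges_nodup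
          rw [Walk.edges_cons] at hnd
          rw [hf0]
          exact (List.nodup_cons.mp hnd).1
        have he0p' : e0 ∈ p'.edges := by
          rw [Sym2.eq_iff] at hf0
          rcases hf0 with ⟨h1, h2⟩ | ⟨h1, h2⟩
          · subst h1; subst h2
            exact (path_eq hT hp0 hp') ▸ he0
          · subst h1; subst h2
            have := (path_eq hT hp0 hp'.reverse) ▸ he0
            rwa [Walk.edges_reverse, List.mem_reverse] at this
        have hin : s(a0, b0) ∈ (Walk.cons h q').edges := by
          rw [Walk.edges_cons, hf0]
          exact List.mem_cons_self
        rw [if_neg hnotin, if_pos hin, Nat.add_zero]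
        exact List.count_eq_one_of_mem hp'.isTrail.edges_nodup he0p'
      · have hnot : e0 ∉ p'.edges := fun hmem =>
          hf0 (seg_eq hT ha0 hb0 hu'c hzc hp0 hp' hp0c hsegc' he0 hmem)
        have hiff : (s(a0, b0) ∈ (Walk.cons h q').edges) ↔ (s(a0, b0) ∈ q'.edges) := by
          rw [Walk.edges_cons, List.mem_cons]
          simp [hf0]
        rw [List.count_eq_zero.mpr hnot, Nat.zero_add, if_congr hiff rfl rfl]

lemma buildC [Fintype V] (hT : T.IsTree) {C : SimpleGraph V} (hC : IsCPT T S C)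
    {w wC : Sym2 V → ℝ}
    (hwC : ∀ a b : V, C.Adj a b → PathMaxW T w a b (wC s(a, b))) :
    ∀ {x v : V} (P : T.Walk x v), v ∈ cptVerts T S → ∀ {a : V} (R : T.Walk a x),
      (R.append P).IsPath → a ∈ cptVerts T S →
      (∀ z ∈ R.support, z ∈ cptVerts T S → z = a) →
      ∃ q : C.Walk a v, q.IsPath ∧ (∀ z ∈ q.support, z = a ∨ z ∈ P.support) ∧
        (∀ f ∈ q.edges, ∃ e ∈ (R.append P).edges, wC f = w e) ∧
        (∀ e ∈ (R.append P).edges, ∃ f ∈ q.edges, w e ≤ wC f) := by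
  intro x v P
  induction P with
  | nil =>
    intro hv a R hRP hacpt hRc
    rw [Walk.append_nil] at hRP
    have hva := hRc _ R.end_mem_support hv
    subst hva
    have hnil : R = Walk.nil := Walk.isPath_iff_eq_nil.mp hRP
    subst hnil
    exact ⟨Walk.nil, Walk.IsPath.nil, by simp, by simp, by simp⟩
  | @cons x x1 v h P' ih =>
    intro hv a R hRP hacpt hRc
    have hpath2 : (Walk.cons h P').IsPath := hRP.of_append_right
    have hnd := hRP.2
    rw [Walk.support_append, Walk.support_cons, List.tail_cons, List.nodup_append] at hnd
    have hdisj : ∀ z ∈ R.support, z ∉ P'.support := fun z hz hz2 => hnd.2.2 z hz z hz2 rfl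
    by_cases hx1 : x1 ∈ cptVerts T S
    · -- emit a C-edge from a to x1
      have hax1 : a ≠ x1 := fun hh =>
        hdisj a R.start_mem_support (hh ▸ P'.start_mem_support)
      have hx1R : x1 ∉ R.support := fun hh => hdisj x1 hh P'.start_mem_support
      -- the segment from a to x1
      have hsegpath : (R.append (Walk.cons h Walk.nil)).IsPath := by
        rw [Walk.isPath_def, Walk.support_append, Walk.support_cons, List.tail_cons]
        simp only [Walk.support_nil]
        rw [List.nodup_append]
        exact ⟨hRP.of_append_left.2, List.nodup_singleton _,
          by intro z hz b hb hzb; rw [List.mem_singleton] at hb; exact hx1R (by rw [← hb, ← hzb]; exact hz)⟩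
      have hsegc : ∀ z ∈ (R.append (Walk.cons h Walk.nil)).support,
          z ∈ cptVerts T S → z = a ∨ z = x1 := by
        intro z hz hzc
        rw [Walk.mem_support_append_iff] at hz
        rcases hz with hz | hz
        · exact Or.inl (hRc z hz hzc)
        · rw [Walk.support_cons, Walk.support_nil, List.mem_cons, List.mem_singleton] at hz
          rcases hz with hz | hz
          · exact Or.inl (hRc z (hz ▸ R.end_mem_support) hzc)
          · exact Or.inr hz
      have hadjC : C.Adj a x1 := (hC a x1).2
        ⟨hacpt, hx1, hax1, R.append (Walk.cons h Walk.nil), hsegpath, hsegc⟩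
      obtain ⟨q', hq'path, hq'sup, hq'1, hq'2⟩ := ih hv Walk.nil
        (by rw [Walk.nil_append]; exact hpath2.of_cons) hx1
        (by intro z hz hzc; rw [Walk.support_nil, List.mem_singleton] at hz; exact hz)
      obtain ⟨pw, hpw, ⟨ew, hewm, hewe⟩, hwmax⟩ := hwC a x1 hadjC
      have hpweq : pw = R.append (Walk.cons h Walk.nil) := path_eq hT hpw hsegpath
      rw [hpweq] at hewm hwmax
      have haq' : a ∉ q'.support := by
        intro hh
        rcases hq'sup a hh with hh' | hh'
        · exact hax1 hh'
        · exact hdisj a R.start_mem_support hh'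
      refine ⟨Walk.cons hadjC q', hq'path.cons haq', ?_, ?_, ?_⟩
      · intro z hz
        rw [Walk.support_cons, List.mem_cons] at hz
        rcases hz with rfl | hz
        · exact Or.inl rfl
        · rcases hq'sup z hz with rfl | hz'
          · exact Or.inr (by rw [Walk.support_cons]; exact List.mem_cons_of_mem _ P'.start_mem_support)
          · exact Or.inr (by rw [Walk.support_cons]; exact List.mem_cons_of_mem _ hz')
      · intro f hf
        rw [Walk.edges_cons, List.mem_cons] at hf
        rcases hf with rfl | hf
        · refine ⟨ew, ?_, hewe.symm⟩
          rw [Walk.edges_append] at hewm ⊢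
          rw [Walk.edges_cons] at hewm ⊢
          rw [Walk.edges_nil] at hewm
          rcases List.mem_append.mp hewm with hh | hh
          · exact List.mem_append_left _ hh
          · rw [List.mem_singleton] at hh
            exact List.mem_append_right _ (hh ▸ List.mem_cons_self)
        · obtain ⟨e, he, hfe⟩ := hq'1 f hf
          rw [Walk.nil_append] at he
          refine ⟨e, ?_, hfe⟩
          rw [Walk.edges_append, Walk.edges_cons]
          exact List.mem_append_right _ (List.mem_cons_of_mem _ he)
      · intro e he
        rw [Walk.edges_append, Walk.edges_cons, List.mem_append, List.mem_cons] at he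
        rcases he with he | he | he
        · refine ⟨s(a, x1), by rw [Walk.edges_cons]; exact List.mem_cons_self, ?_⟩
          refine hwmax e ?_
          rw [Walk.edges_append]
          exact List.mem_append_left _ he
        · refine ⟨s(a, x1), by rw [Walk.edges_cons]; exact List.mem_cons_self, ?_⟩
          refine hwmax _ ?_
          rw [Walk.edges_append, Walk.edges_cons, Walk.edges_nil]
          exact List.mem_append_right _ (he ▸ List.mem_cons_self)
        · obtain ⟨f, hf, hfe⟩ := hq'2 e (by rw [Walk.nil_append]; exact he)
          exact ⟨f, by rw [Walk.edges_cons]; exact List.mem_cons_of_mem _ hf, hfe⟩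
    · -- extend the pending segment
      have hassoc : (R.append (Walk.cons h Walk.nil)).append P' = R.append (Walk.cons h P') :=
        (Walk.append_assoc R (Walk.cons h Walk.nil) P').symm
      obtain ⟨q, hqpath, hqsup, hq1, hq2⟩ := ih hv (R.append (Walk.cons h Walk.nil))
        (by rw [hassoc]; exact hRP) hacpt
        (by
          intro z hz hzc
          rw [Walk.mem_support_append_iff] at hz
          rcases hz with hz | hz
          · exact hRc z hz hzc
          · rw [Walk.support_cons, Walk.support_nil, List.mem_cons, List.mem_singleton] at hz
            rcases hz with hz | hz
            · exact hRc z (hz ▸ R.end_mem_support) hzc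
            · exact absurd hzc (hz ▸ hx1))
      rw [hassoc] at hq1 hq2
      refine ⟨q, hqpath, ?_, hq1, hq2⟩
      intro z hz
      rcases hqsup z hz with rfl | hz'
      · exact Or.inl rfl
      · exact Or.inr (by rw [Walk.support_cons]; exact List.mem_cons_of_mem _ hz')

lemma sym2_decomp (e : Sym2 V) : ∃ x y, e = s(x, y) := by
  induction e using Sym2.ind with
  | _ x y => exact ⟨x, y, rfl⟩


/-- The compressed path tree preserves maximum edge weights between marked vertices:
if every edge of `C` is weighted by the maximum edge weight of the corresponding path
in `T`, then for all marked `u ≠ v`, the maximum edge weight on the `u`-`v` path in `C`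
equals the maximum edge weight on the `u`-`v` path in `T`. -/
theorem cpt_preserves_path_max [Fintype V]
    (T : SimpleGraph V) (hT : T.IsTree) (w : Sym2 V → ℝ)
    (S : Set V) (C : SimpleGraph V) (hC : IsCPT T S C)
    (wC : Sym2 V → ℝ)
    (hwC : ∀ a b : V, C.Adj a b → PathMaxW T w a b (wC s(a, b)))
    (u v : V) (hu : u ∈ S) (hv : v ∈ S) (huv : u ≠ v) (m : ℝ) :
    PathMaxW C wC u v m ↔ PathMaxW T w u v m := by
  classical
  constructor
  · rintro ⟨q', hq', ⟨f0, hf0q, hf0m⟩, hqall⟩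
    obtain ⟨a0, b0, rfl⟩ := sym2_decomp f0
    have hadj : C.Adj a0 b0 := q'.adj_of_mem_edges hf0q
    obtain ⟨ha0, hb0, hne0, pseg, hpseg, hsegc⟩ := (hC a0 b0).1 hadj
    obtain ⟨p0, hp0, hex0, hmax0⟩ := hwC a0 b0 hadj
    obtain ⟨e0, he0, he0w⟩ := hex0
    have hsegc0 : ∀ z ∈ p0.support, z ∈ cptVerts T S → z = a0 ∨ z = b0 :=
      (path_eq hT hpseg hp0) ▸ hsegc
    obtain ⟨W, hWle, hWcnt⟩ := buildW hT hC hwC hp0 ha0 hb0 hsegc0 he0 q' hq' hqall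
    rw [if_pos hf0q] at hWcnt
    obtain ⟨x0, y0, rfl⟩ := sym2_decomp e0
    have hxy0 : T.Adj x0 y0 := p0.adj_of_mem_edges he0
    have hmem : s(x0, y0) ∈ W.bypass.edges :=
      mem_path_edges_of_count_one hT hxy0 hWcnt W.bypass
    exact ⟨W.bypass, W.bypass_isPath, ⟨s(x0, y0), hmem, he0w.trans hf0m⟩,
      fun e he => hWle e (W.edges_bypass_subset he)⟩
  · rintro ⟨P, hP, ⟨em, hem, hemw⟩, hmaxP⟩
    obtain ⟨q, hqpath, hqsup, hq1, hq2⟩ := buildC hT hC hwC P (Or.inl hv) Walk.nil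
      (by rw [Walk.nil_append]; exact hP) (Or.inl hu)
      (by intro z hz hzc; rw [Walk.support_nil, List.mem_singleton] at hz; exact hz)
    rw [Walk.nil_append] at hq1 hq2  -- may fail: edges of (nil.append P)
    refine ⟨q, hqpath, ?_, ?_⟩
    · obtain ⟨f, hf, hlef⟩ := hq2 em hem
      obtain ⟨e, he, hfe⟩ := hq1 f hf
      exact ⟨f, hf, le_antisymm (hfe ▸ hmaxP e he) (hemw ▸ hlef)⟩
    · intro f hf
      obtain ⟨e, he, hfe⟩ := hq1 f hf
      exact hfe ▸ hmaxP e he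
end

section
/- Let e₁, e₂, ..., e_m be a stream of edges on vertex set V, each edge e assigned weight -τ(e) where τ(e) is its arrival position, and let F be a minimum spanning forest of the graph of all edges seen so far. Then for any window threshold T_W, vertices u and v are connected in the subgraph of edges e with τ(e) ≥ T_W if and only if u and v are connected in F and the maximum-weight (i.e., oldest) edge e* on the path from u to v in F satisfies τ(e*) ≥ T_W. -/
open SimpleGraph

variable {V : Type*}

def IsSpanningForest (G F : SimpleGraph V) : Prop :=
  F ≤ G ∧ F.IsAcyclic ∧ ∀ u v : V, G.Reachable u v → F.Reachable u v

noncomputable def wSum [Fintype V] (w : Sym2 V → ℝ) (F : SimpleGraph V) : ℝ :=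
  ∑ e ∈ (Set.toFinite F.edgeSet).toFinset, w e

def IsMSF [Fintype V] (w : Sym2 V → ℝ) (G F : SimpleGraph V) : Prop :=
  IsSpanningForest G F ∧ ∀ F' : SimpleGraph V, IsSpanningForest G F' → wSum w F ≤ wSum w F'

/-- Reachability transfers along a map of adjacency to reachability. -/
lemma reach_of_adj_reach {A B : SimpleGraph V} (h : ∀ x y : V, A.Adj x y → B.Reachable x y)
    {x y : V} (hr : A.Reachable x y) : B.Reachable x y := by
  obtain ⟨p⟩ := hr
  induction p with
  | nil => exact Reachable.refl _
  | cons h' _ ih => exact (h _ _ h').trans ih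

lemma mem_sdiff_edgeSet {F : SimpleGraph V} {f e : Sym2 V} (he : e ∈ F.edgeSet) (hne : e ≠ f) :
    e ∈ (F \ fromEdgeSet {f}).edgeSet := by
  rw [edgeSet_sdiff, edgeSet_fromEdgeSet]
  exact ⟨he, by simp [hne]⟩

/-- Removing an edge of a path, the endpoints of the path can still reach
the respective endpoints of the removed edge. -/
lemma detour {F : SimpleGraph V} {a b : V} (p : F.Walk a b) (hp : p.IsPath)
    {f : Sym2 V} (hf : f ∈ p.edges) :
    ∃ x y : V, f = s(x, y) ∧ (F \ fromEdgeSet {f}).Reachable a x ∧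
      (F \ fromEdgeSet {f}).Reachable y b := by
  induction p with
  | nil => simp at hf
  | @cons a c b h q ih =>
    rw [SimpleGraph.Walk.edges_cons, List.mem_cons] at hf
    have hnodup : (SimpleGraph.Walk.cons h q).edges.Nodup := hp.isTrail.edges_nodup
    rw [SimpleGraph.Walk.edges_cons, List.nodup_cons] at hnodup
    rcases hf with hf | hf
    · refine ⟨a, c, hf, Reachable.refl _, ?_⟩
      refine ⟨q.transfer _ fun e he => mem_sdiff_edgeSet (q.edges_subset_edgeSet he) ?_⟩
      rintro rfl
      exact hnodup.1 (hf ▸ he)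
    · obtain ⟨x, y, rfl, h1, h2⟩ := ih hp.of_cons hf
      have hadj : (F \ fromEdgeSet {s(x, y)}).Adj a c := by
        refine ⟨h, ?_⟩
        rw [fromEdgeSet_adj]
        rintro ⟨h3, -⟩
        rw [Set.mem_singleton_iff] at h3
        exact hnodup.1 (h3 ▸ hf)
      exact ⟨x, y, rfl, hadj.reachable.trans h1, h2⟩

/-- In an acyclic graph, deleting an edge of a path disconnects the path's endpoints. -/
lemma no_reach {F : SimpleGraph V} (hac : F.IsAcyclic) {a b : V} (p : F.Walk a b)
    (hp : p.IsPath) {f : Sym2 V} (hf : f ∈ p.edges) :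
    ¬ (F \ fromEdgeSet {f}).Reachable a b := by
  obtain ⟨x, y, rfl, h1, h2⟩ := detour p hp hf
  intro hr
  have hb : F.IsBridge s(x, y) :=
    isAcyclic_iff_forall_edge_isBridge.mp hac (p.edges_subset_edgeSet hf)
  rw [isBridge_iff] at hb
  exact hb (h1.symm.trans (hr.trans h2.symm))

/-- The cycle property of minimum spanning forests: every edge on the `F`-path between the
endpoints of an edge `e'` of `G` has weight at most `w e'`. -/
lemma exchange [Fintype V] {w : Sym2 V → ℝ} {G F : SimpleGraph V} (hF : IsMSF w G F)
    {a b : V} (hab : G.Adj a b) (p : F.Walk a b) (hp : p.IsPath)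
    {f : Sym2 V} (hf : f ∈ p.edges) : w f ≤ w s(a, b) := by
  classical
  obtain ⟨⟨hle, hac, hspan⟩, hmin⟩ := hF
  by_cases heF : s(a, b) ∈ F.edgeSet
  · -- the path is the single edge, so f = s(a, b)
    have hadj : F.Adj a b := heF
    have := hac.path_unique ⟨p, hp⟩ (SimpleGraph.Path.singleton hadj)
    rw [SimpleGraph.Path.singleton, Subtype.mk.injEq] at this
    subst this
    simp only [SimpleGraph.Walk.edges_cons, SimpleGraph.Walk.edges_nil,
      List.mem_singleton] at hf
    subst hf
    exact le_refl _
  · have hfF : f ∈ F.edgeSet := p.edges_subset_edgeSet hf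
    have hfne : f ≠ s(a, b) := fun h => heF (h ▸ hfF)
    set D := F \ fromEdgeSet {f} with hD
    set F' := D ⊔ fromEdgeSet {s(a, b)} with hF'
    have hDle : D ≤ F := sdiff_le
    -- F' is a spanning forest of G
    have hsf : IsSpanningForest G F' := by
      refine ⟨sup_le (hDle.trans hle) ?_, ?_, ?_⟩
      · intro x y hxy
        rw [fromEdgeSet_adj, Set.mem_singleton_iff] at hxy
        obtain ⟨h1, -⟩ := hxy
        rw [Sym2.eq_iff] at h1
        rcases h1 with ⟨rfl, rfl⟩ | ⟨rfl, rfl⟩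
        · exact hab
        · exact hab.symm
      · -- acyclic
        intro v c hc
        by_cases he : s(a, b) ∈ c.edges
        · have hkey := adj_and_reachable_delete_edges_iff_exists_cycle.mpr ⟨v, c, hc, he⟩
          have hmono : F' \ fromEdgeSet {s(a, b)} ≤ D := by
            intro x y hxy
            rw [sdiff_adj, sup_adj] at hxy
            rcases hxy.1 with h1 | h1
            · exact h1
            · exact absurd h1 hxy.2
          exact no_reach hac p hp hf (Reachable.mono hmono hkey.2)
        · have hsub : ∀ e ∈ c.edges, e ∈ F.edgeSet := by
            intro e hce
            have := c.edges_subset_edgeSet hce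
            rw [hF', edgeSet_sup] at this
            rcases this with h1 | h1
            · rw [hD, edgeSet_sdiff] at h1
              exact h1.1
            · rw [edgeSet_fromEdgeSet, Set.mem_diff, Set.mem_singleton_iff] at h1
              exact absurd (h1.1 ▸ hce) he
          exact hac (c.transfer F hsub) (hc.transfer hsub)
      · -- spanning
        intro x' y' hg
        refine reach_of_adj_reach (fun cc dd hcd => ?_) (hspan x' y' hg)
        by_cases hcdf : s(cc, dd) = f
        · obtain ⟨x, y, hxy, h1, h2⟩ := detour p hp hf
          have hDF' : D ≤ F' := le_sup_left
          have habF' : F'.Adj a b :=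
            (sup_adj _ _ _ _).mpr (Or.inr ((fromEdgeSet_adj _).mpr ⟨Set.mem_singleton _, hab.ne⟩))
          have hxyR : F'.Reachable x y :=
            ((h1.mono hDF').symm.trans habF'.reachable).trans (h2.mono hDF').symm
          rw [hxy, Sym2.eq_iff] at hcdf
          rcases hcdf with ⟨rfl, rfl⟩ | ⟨rfl, rfl⟩
          · exact hxyR
          · exact hxyR.symm
        · refine Adj.reachable ((sup_adj _ _ _ _).mpr (Or.inl ⟨hcd, fun h => ?_⟩))
          exact hcdf ((fromEdgeSet_adj _).mp h).1
    -- weight comparison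
    have hwle := hmin F' hsf
    have hfdiag : ¬ f.IsDiag := F.not_isDiag_of_mem_edgeSet hfF
    have habdiag : ¬ (s(a, b) : Sym2 V).IsDiag := by simp [hab.ne]
    have hset : (Set.toFinite F'.edgeSet).toFinset =
        insert s(a, b) (((Set.toFinite F.edgeSet).toFinset).erase f) := by
      ext e
      simp only [Set.Finite.mem_toFinset, Finset.mem_insert, Finset.mem_erase,
        Set.Finite.mem_toFinset, hF', edgeSet_sup, hD, edgeSet_sdiff, edgeSet_fromEdgeSet,
        Set.mem_union, Set.mem_diff, Set.mem_singleton_iff, Set.mem_setOf_eq]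
      constructor
      · rintro (⟨h1, h2⟩ | ⟨h1, -⟩)
        · exact Or.inr ⟨fun h => h2 ⟨h, fun hd => hfdiag (h ▸ hd)⟩, h1⟩
        · exact Or.inl h1
      · rintro (rfl | ⟨h1, h2⟩)
        · exact Or.inr ⟨rfl, habdiag⟩
        · exact Or.inl ⟨h2, fun h => h1 h.1⟩
    have hfmem : f ∈ (Set.toFinite F.edgeSet).toFinset := by
      rw [Set.Finite.mem_toFinset]; exact hfF
    have habmem : s(a, b) ∉ ((Set.toFinite F.edgeSet).toFinset).erase f := by
      simp only [Finset.mem_erase, Set.Finite.mem_toFinset]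
      rintro ⟨-, h⟩; exact heF h
    have hsum : wSum w F' = w s(a, b) + (wSum w F - w f) := by
      rw [wSum, hset, Finset.sum_insert habmem, wSum,
        ← Finset.sum_erase_add _ _ hfmem]
      ring
    rw [hsum] at hwle
    linarith

/-- The recent-edge lemma: edges arrive in a stream with distinct arrival positions
`τ`, each edge `e` has weight `-τ e`, and `F` is a minimum spanning forest of the graph
of all edges so far. Then `u` and `v` are connected by the edges of the window
(those with `τ e ≥ T_W`) iff they are connected in `F` and every maximum-weight
(i.e. oldest) edge on the `u`-`v` path in `F` has arrival position at least `T_W`. -/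
theorem recent_edge [Fintype V]
    (G : SimpleGraph V) (τ : Sym2 V → ℕ) (hτ : Set.InjOn τ G.edgeSet)
    (F : SimpleGraph V) (hF : IsMSF (fun e => -(τ e : ℝ)) G F)
    (TW : ℕ) (u v : V) :
    (fromEdgeSet {e ∈ G.edgeSet | TW ≤ τ e}).Reachable u v ↔
      ∃ p : F.Walk u v, p.IsPath ∧
        ∀ e ∈ p.edges,
          (∀ e' ∈ p.edges, -((τ e' : ℝ)) ≤ -((τ e : ℝ))) → TW ≤ τ e := by
  classical
  obtain ⟨⟨hle, hac, hspan⟩, -⟩ := id hF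
  constructor
  · intro h
    -- first move to the graph of window edges of F
    set H := fromEdgeSet {e ∈ F.edgeSet | TW ≤ τ e} with hH
    have hreach : H.Reachable u v := by
      refine reach_of_adj_reach (fun x y hxy => ?_) h
      rw [fromEdgeSet_adj, Set.mem_setOf_eq] at hxy
      obtain ⟨⟨hGe, hTWe⟩, hne⟩ := hxy
      have hGadj : G.Adj x y := hGe
      obtain ⟨q⟩ := hspan x y hGadj.reachable
      let p := q.toPath
      have hedges : ∀ e ∈ (p : F.Walk x y).edges, e ∈ H.edgeSet := by
        intro e he
        have hw := exchange hF hGadj (p : F.Walk x y) p.2 he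
        simp only [neg_le_neg_iff, Nat.cast_le] at hw
        rw [hH, edgeSet_fromEdgeSet]
        refine ⟨⟨(p : F.Walk x y).edges_subset_edgeSet he, le_trans hTWe hw⟩, ?_⟩
        exact F.not_isDiag_of_mem_edgeSet ((p : F.Walk x y).edges_subset_edgeSet he)
      exact ⟨(p : F.Walk x y).transfer H hedges⟩
    obtain ⟨q⟩ := hreach
    let qp := q.toPath
    have hsub : ∀ e ∈ (qp : H.Walk u v).edges, e ∈ F.edgeSet := by
      intro e he
      have := (qp : H.Walk u v).edges_subset_edgeSet he
      rw [hH, edgeSet_fromEdgeSet] at this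
      exact this.1.1
    have hTWall : ∀ e ∈ (qp : H.Walk u v).edges, TW ≤ τ e := by
      intro e he
      have := (qp : H.Walk u v).edges_subset_edgeSet he
      rw [hH, edgeSet_fromEdgeSet] at this
      exact this.1.2
    refine ⟨(qp : H.Walk u v).transfer F hsub, qp.2.transfer hsub, ?_⟩
    intro e he _
    rw [SimpleGraph.Walk.edges_transfer] at he
    exact hTWall e he
  · rintro ⟨p, hp, hmin⟩
    -- all edges of p satisfy TW ≤ τ
    have hall : ∀ e ∈ p.edges, TW ≤ τ e := by
      intro e he
      have hne : p.edges ≠ [] := fun h => by simp [h] at he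
      obtain ⟨e₀, he₀, hmin₀⟩ := p.edges.toFinset.exists_min_image τ
        (by simpa [List.toFinset_eq_empty_iff] using hne)
      rw [List.mem_toFinset] at he₀
      have hTW0 : TW ≤ τ e₀ := by
        refine hmin e₀ he₀ fun e' he' => ?_
        simp only [neg_le_neg_iff, Nat.cast_le]
        exact hmin₀ e' (List.mem_toFinset.mpr he')
      exact le_trans hTW0 (hmin₀ e (List.mem_toFinset.mpr he))
    refine ⟨p.transfer _ fun e he => ?_⟩
    rw [edgeSet_fromEdgeSet, Set.mem_diff, Set.mem_setOf_eq]
    have heF : e ∈ F.edgeSet := p.edges_subset_edgeSet he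
    exact ⟨⟨edgeSet_mono hle heF, hall e he⟩, F.not_isDiag_of_mem_edgeSet heF⟩
end

section
/- Let G be a weighted graph on n vertices with all edge weights in [1, W], fix ε > 0, and for each i ≥ 0 let G_i be the subgraph of G containing all edges of weight at most (1+ε)^i, with cc(G_i) denoting the number of connected components of G_i. Then the weight of the minimum spanning forest of G is at most (n - cc(G_0)) + Σ_{i≥1} (cc(G_{i-1}) - cc(G_i))(1+ε)^i, and this quantity is at most (1+ε) times the minimum spanning forest weight. -/
open SimpleGraph

variable {V : Type*}

/-- The subgraph `G_i` of `G` consisting of all edges of weight at most `(1 + ε)^i`. -/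
def levelGraph (G : SimpleGraph V) (w : Sym2 V → ℝ) (ε : ℝ) (i : ℕ) : SimpleGraph V :=
  fromEdgeSet {e ∈ G.edgeSet | w e ≤ (1 + ε) ^ i}

/-- Number of connected components, as a real number. -/
noncomputable def ccR (H : SimpleGraph V) : ℝ :=
  (Nat.card H.ConnectedComponent : ℝ)

private lemma acyclic_anti {H K : SimpleGraph V} (h : H ≤ K) (hK : K.IsAcyclic) :
    H.IsAcyclic := by
  intro v c hc
  exact hK (c.mapLe h) ((Walk.mapLe_isCycle h).mpr hc)

private lemma reachable_of_forall_adj {H K : SimpleGraph V}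
    (hadj : ∀ u v : V, H.Adj u v → K.Reachable u v) {u v : V} (h : H.Reachable u v) :
    K.Reachable u v := by
  obtain ⟨p⟩ := h
  induction p with
  | nil => exact Reachable.refl _
  | cons h' _ ih => exact (hadj _ _ h').trans ih

/-- Reachability decomposition after deleting one edge. -/
private lemma reach_cases {H : SimpleGraph V} {x y u v : V} (h : H.Reachable u v) :
    (H \ fromEdgeSet {s(x, y)}).Reachable u v ∨
    ((H \ fromEdgeSet {s(x, y)}).Reachable u x ∧ (H \ fromEdgeSet {s(x, y)}).Reachable y v) ∨
    ((H \ fromEdgeSet {s(x, y)}).Reachable u y ∧ (H \ fromEdgeSet {s(x, y)}).Reachable x v) := by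
  obtain ⟨p⟩ := h
  induction p with
  | nil => exact Or.inl (Reachable.refl _)
  | @cons a c b h' q ih =>
    by_cases hec : s(a, c) = s(x, y)
    · rcases Sym2.eq_iff.mp hec with ⟨rfl, rfl⟩ | ⟨rfl, rfl⟩
      · rcases ih with h1 | ⟨h1, h2⟩ | ⟨h1, h2⟩
        · exact Or.inr (Or.inl ⟨Reachable.refl _, h1⟩)
        · exact Or.inl (h1.symm.trans h2)
        · exact Or.inl h2
      · rcases ih with h1 | ⟨h1, h2⟩ | ⟨h1, h2⟩
        · exact Or.inr (Or.inr ⟨Reachable.refl _, h1⟩)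
        · exact Or.inl h2
        · exact Or.inl (h1.symm.trans h2)
    · have hadj : (H \ fromEdgeSet {s(x, y)}).Adj a c := by
        rw [sdiff_adj, fromEdgeSet_adj]
        exact ⟨h', by simp [hec]⟩
      rcases ih with h1 | ⟨h1, h2⟩ | ⟨h1, h2⟩
      · exact Or.inl (hadj.reachable.trans h1)
      · exact Or.inr (Or.inl ⟨hadj.reachable.trans h1, h2⟩)
      · exact Or.inr (Or.inr ⟨hadj.reachable.trans h1, h2⟩)

/-- Deleting a bridge-like edge increases the component count by one. -/
private lemma card_cc_sdiff [Fintype V] {H : SimpleGraph V} {x y : V}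
    (hxy : H.Adj x y) (hnr : ¬ (H \ fromEdgeSet {s(x, y)}).Reachable x y) :
    Nat.card (H \ fromEdgeSet {s(x, y)}).ConnectedComponent
      = Nat.card H.ConnectedComponent + 1 := by
  classical
  set H' := H \ fromEdgeSet {s(x, y)} with hH'
  have hle : H' ≤ H := sdiff_le
  -- map H'.CC → Option H.CC
  let f : H'.ConnectedComponent → Option H.ConnectedComponent :=
    ConnectedComponent.lift
      (fun u => if H'.Reachable u y then none else some (H.connectedComponentMk u))
      (by
        intro a b p _
        have hab : H'.Reachable a b := ⟨p⟩
        by_cases hay : H'.Reachable a y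
        · rw [if_pos hay, if_pos (hab.symm.trans hay)]
        · rw [if_neg hay, if_neg (fun hby => hay (hab.trans hby))]
          exact congrArg some (ConnectedComponent.eq.mpr (hab.mono hle)))
  have hbij : Function.Bijective f := by
    constructor
    · intro c d
      induction c using ConnectedComponent.ind with | _ u =>
      induction d using ConnectedComponent.ind with | _ v =>
      intro hcd
      simp only [f, ConnectedComponent.lift_mk] at hcd
      by_cases huy : H'.Reachable u y
      · by_cases hvy : H'.Reachable v y
        · exact ConnectedComponent.eq.mpr (huy.trans hvy.symm)
        · rw [if_pos huy, if_neg hvy] at hcd; exact absurd hcd (by simp)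
      · by_cases hvy : H'.Reachable v y
        · rw [if_neg huy, if_pos hvy] at hcd; exact absurd hcd (by simp)
        · rw [if_neg huy, if_neg hvy, Option.some_inj] at hcd
          have huv : H.Reachable u v := ConnectedComponent.eq.mp hcd
          rcases reach_cases (x := x) (y := y) huv with h1 | ⟨h1, h2⟩ | ⟨h1, h2⟩
          · exact ConnectedComponent.eq.mpr h1
          · exact absurd h2.symm hvy
          · exact absurd h1 huy
    · intro o
      match o with
      | none =>
        refine ⟨H'.connectedComponentMk y, ?_⟩
        simp only [f, ConnectedComponent.lift_mk]
        rw [if_pos (Reachable.refl _)]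
      | some c =>
        induction c using ConnectedComponent.ind with | _ u =>
        by_cases huy : H'.Reachable u y
        · refine ⟨H'.connectedComponentMk x, ?_⟩
          simp only [f, ConnectedComponent.lift_mk]
          rw [if_neg hnr, Option.some_inj]
          exact ConnectedComponent.eq.mpr (hxy.reachable.trans (huy.mono hle).symm)
        · refine ⟨H'.connectedComponentMk u, ?_⟩
          simp only [f, ConnectedComponent.lift_mk]
          rw [if_neg huy]
  rw [Nat.card_eq_of_bijective f hbij, Finite.card_option]

/-- An acyclic graph on a finite vertex set: components + edges = vertices. -/
private lemma forest_card [Fintype V] :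
    ∀ (n : ℕ) (H : SimpleGraph V), H.IsAcyclic →
      (Set.toFinite H.edgeSet).toFinset.card = n →
      Nat.card H.ConnectedComponent + n = Fintype.card V := by
  intro n
  induction n with
  | zero =>
    intro H _ hcard
    have hE : H.edgeSet = ∅ := by
      rw [Finset.card_eq_zero] at hcard
      have := Set.Finite.toFinset_eq_empty.mp hcard
      exact this
    have hbot : H = ⊥ := edgeSet_eq_empty.mp hE
    subst hbot
    have : Function.Bijective ((⊥ : SimpleGraph V).connectedComponentMk) := by
      constructor
      · intro u v huv
        exact reachable_bot.mp (ConnectedComponent.eq.mp huv)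
      · exact ConnectedComponent.ind (fun v => ⟨v, rfl⟩)
    rw [add_zero, ← Nat.card_eq_of_bijective _ this, Nat.card_eq_fintype_card]
  | succ n ih =>
    intro H hac hcard
    have hne : H.edgeSet.Nonempty := by
      rw [← Set.Finite.toFinset_nonempty (Set.toFinite _)]
      exact Finset.card_pos.mp (by omega)
    obtain ⟨e, he⟩ := hne
    induction e using Sym2.ind with | _ x y =>
    have hxy : H.Adj x y := he
    set H' := H \ fromEdgeSet {s(x, y)} with hH'
    have hE' : H'.edgeSet = H.edgeSet \ {s(x, y)} := by
      rw [hH', edgeSet_sdiff, edgeSet_fromEdgeSet, edgeSet_sdiff_sdiff_isDiag]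
    have hac' : H'.IsAcyclic := acyclic_anti sdiff_le hac
    have hnr : ¬ H'.Reachable x y :=
      ((isAcyclic_iff_forall_adj_isBridge.mp hac) hxy)
    have hcard' : (Set.toFinite H'.edgeSet).toFinset.card = n := by
      classical
      have : (Set.toFinite H'.edgeSet).toFinset
          = ((Set.toFinite H.edgeSet).toFinset).erase s(x, y) := by
        ext g
        simp only [Set.Finite.mem_toFinset, hE', Set.mem_diff, Set.mem_singleton_iff,
          Finset.mem_erase]
        tauto
      rw [this, Finset.card_erase_of_mem (by simpa [Set.Finite.mem_toFinset] using he), hcard]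
      omega
    have := ih H' hac' hcard'
    rw [card_cc_sdiff hxy hnr] at this
    omega

private lemma cc_card_eq_of_spanning {G F : SimpleGraph V} (h : IsSpanningForest G F) :
    Nat.card F.ConnectedComponent = Nat.card G.ConnectedComponent := by
  apply Nat.card_eq_of_bijective (ConnectedComponent.map (Hom.ofLE h.1))
  constructor
  · intro c d
    induction c using ConnectedComponent.ind with | _ u =>
    induction d using ConnectedComponent.ind with | _ v =>
    intro hcd
    simp only [ConnectedComponent.map_mk, Hom.ofLE_apply] at hcd
    exact ConnectedComponent.eq.mpr (h.2.2 u v (ConnectedComponent.eq.mp hcd))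
  · intro c
    induction c using ConnectedComponent.ind with | _ u =>
    exact ⟨F.connectedComponentMk u, by
      simp only [ConnectedComponent.map_mk, Hom.ofLE_apply]⟩

/-- Splitting a trail at an edge, avoiding that edge on both sides. -/
private lemma walk_split {H : SimpleGraph V} {u v x y : V} (p : H.Walk u v)
    (hp : p.IsTrail) (hf : s(x, y) ∈ p.edges) :
    ((∃ q : H.Walk u x, s(x, y) ∉ q.edges) ∧ (∃ r : H.Walk y v, s(x, y) ∉ r.edges)) ∨
    ((∃ q : H.Walk u y, s(x, y) ∉ q.edges) ∧ (∃ r : H.Walk x v, s(x, y) ∉ r.edges)) := by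
  induction p with
  | nil => simp at hf
  | @cons a c b h q ih =>
    rw [Walk.edges_cons] at hf
    rw [Walk.isTrail_cons] at hp
    by_cases hec : s(a, c) = s(x, y)
    · have hq : s(x, y) ∉ q.edges := hec ▸ hp.2
      rcases Sym2.eq_iff.mp hec with ⟨rfl, rfl⟩ | ⟨rfl, rfl⟩
      · exact Or.inl ⟨⟨Walk.nil, by simp⟩, ⟨q, hq⟩⟩
      · exact Or.inr ⟨⟨Walk.nil, by simp⟩, ⟨q, hq⟩⟩
    · have hf' : s(x, y) ∈ q.edges := by
        rcases List.mem_cons.mp hf with h' | h'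
        · exact absurd h'.symm hec
        · exact h'
      rcases ih hp.1 hf' with ⟨⟨q1, hq1⟩, hr⟩ | ⟨⟨q1, hq1⟩, hr⟩
      · exact Or.inl ⟨⟨Walk.cons h q1, by
          rw [Walk.edges_cons]
          intro hmem
          rcases List.mem_cons.mp hmem with h' | h'
          · exact hec h'.symm
          · exact hq1 h'⟩, hr⟩
      · exact Or.inr ⟨⟨Walk.cons h q1, by
          rw [Walk.edges_cons]
          intro hmem
          rcases List.mem_cons.mp hmem with h' | h'
          · exact hec h'.symm
          · exact hq1 h'⟩, hr⟩


/-- In an MSF, adjacent vertices of `G` are joined by a walk all of whose edges have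
weight at most the weight of the connecting edge. -/
private lemma msf_adj_reachable [Fintype V] {G F : SimpleGraph V} {w : Sym2 V → ℝ}
    (hF : IsMSF w G F) {a b : V} (hab : G.Adj a b) :
    ∃ p : F.Walk a b, ∀ f ∈ p.edges, w f ≤ w s(a, b) := by
  classical
  obtain ⟨⟨hle, hac, hsp⟩, hmin⟩ := hF
  obtain ⟨p0⟩ := hsp a b hab.reachable
  by_contra hcon
  push_neg at hcon
  obtain ⟨f, hfp, hwf⟩ := hcon (p0.toPath : F.Walk a b)
  have hp : (p0.toPath : F.Walk a b).IsPath := p0.toPath.2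
  by_cases hFab : F.Adj a b
  · have huniq := hac.path_unique p0.toPath (Path.singleton hFab)
    rw [huniq] at hfp
    simp only [Path.singleton, Walk.edges_cons, Walk.edges_nil, List.mem_singleton] at hfp
    rw [hfp] at hwf
    exact lt_irrefl _ hwf
  have hnab_edge : s(a, b) ∉ F.edgeSet := hFab
  have key : ∀ x y : V, F.Adj x y → w s(a, b) < w s(x, y) →
      (∃ q : F.Walk a x, s(x, y) ∉ q.edges) → (∃ r : F.Walk y b, s(x, y) ∉ r.edges) →
      False := by
    rintro x y hFxy hwf' ⟨q, hq⟩ ⟨r, hr⟩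
    set F' := F \ fromEdgeSet {s(x, y)} with hF'def
    have hF'edge : F'.edgeSet = F.edgeSet \ {s(x, y)} := by
      rw [hF'def, edgeSet_sdiff, edgeSet_fromEdgeSet, edgeSet_sdiff_sdiff_isDiag]
    have hq' : F'.Reachable a x :=
      ⟨q.transfer F' (fun g hg => by
        rw [hF'edge]
        exact ⟨q.edges_subset_edgeSet hg, fun h => hq (Set.mem_singleton_iff.mp h ▸ hg)⟩)⟩
    have hr' : F'.Reachable y b :=
      ⟨r.transfer F' (fun g hg => by
        rw [hF'edge]
        exact ⟨r.edges_subset_edgeSet hg, fun h => hr (Set.mem_singleton_iff.mp h ▸ hg)⟩)⟩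
    have hbridge : ¬ F'.Reachable x y :=
      ((isAcyclic_iff_forall_adj_isBridge.mp hac) hFxy)
    have hnab : ¬ F'.Reachable a b := fun h =>
      hbridge (hq'.symm.trans (h.trans hr'.symm))
    set F'' := F' ⊔ fromEdgeSet {s(a, b)} with hF''def
    have hleF' : F' ≤ F'' := le_sup_left
    have habF'' : F''.Adj a b := by
      rw [hF''def, sup_adj, fromEdgeSet_adj]
      exact Or.inr ⟨rfl, hab.ne⟩
    have hxyF'' : F''.Reachable x y :=
      (hq'.mono hleF').symm.trans (habF''.reachable.trans (hr'.mono hleF').symm)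
    have hspan'' : ∀ u v : V, F.Adj u v → F''.Reachable u v := by
      intro u v huv
      by_cases h : s(u, v) = s(x, y)
      · rcases Sym2.eq_iff.mp h with ⟨rfl, rfl⟩ | ⟨rfl, rfl⟩
        · exact hxyF''
        · exact hxyF''.symm
      · refine Adj.reachable ?_
        rw [hF''def, sup_adj, hF'def, sdiff_adj, fromEdgeSet_adj]
        exact Or.inl ⟨huv, by simp [h]⟩
    have hac'' : F''.IsAcyclic := by
      intro v0 c hc
      by_cases hec : s(a, b) ∈ c.edges
      · have hcyc := (adj_and_reachable_delete_edges_iff_exists_cycle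
          (G := F'')).mpr ⟨v0, c, hc, hec⟩
        refine hnab (hcyc.2.mono ?_)
        intro u1 v1 h1
        rw [deleteEdges, sdiff_adj] at h1
        obtain ⟨h1a, h1b⟩ := h1
        rw [hF''def, sup_adj] at h1a
        rcases h1a with h2 | h2
        · exact h2
        · exact absurd h2 h1b
      · have hsub : ∀ g ∈ c.edges, g ∈ F'.edgeSet := by
          intro g hg
          have hgmem := c.edges_subset_edgeSet hg
          rw [hF''def, edgeSet_sup] at hgmem
          rcases hgmem with h2 | h2
          · exact h2
          · exfalso
            rw [edgeSet_fromEdgeSet] at h2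
            exact hec (Set.mem_singleton_iff.mp h2.1 ▸ hg)
        exact acyclic_anti sdiff_le hac (c.transfer F' hsub) (hc.transfer hsub)
    have hle'' : F'' ≤ G := by
      rw [hF''def]
      apply sup_le (le_trans sdiff_le hle)
      intro u1 v1 h1
      rw [fromEdgeSet_adj, Set.mem_singleton_iff] at h1
      have : s(u1, v1) ∈ G.edgeSet := by rw [h1.1]; exact hab
      exact this
    have hSF : IsSpanningForest G F'' :=
      ⟨hle'', hac'', fun u v h => reachable_of_forall_adj hspan'' (hsp u v h)⟩
    have hfmem : s(x, y) ∈ (Set.toFinite F.edgeSet).toFinset := by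
      rw [Set.Finite.mem_toFinset]; exact hFxy
    have hW : wSum w F'' = wSum w F - w s(x, y) + w s(a, b) := by
      have hset : (Set.toFinite F''.edgeSet).toFinset
          = insert s(a, b) (((Set.toFinite F.edgeSet).toFinset).erase s(x, y)) := by
        ext g
        simp only [Set.Finite.mem_toFinset, Finset.mem_insert, Finset.mem_erase,
          hF''def, edgeSet_sup, hF'edge, edgeSet_fromEdgeSet, Set.mem_union, Set.mem_diff,
          Set.mem_singleton_iff, Set.mem_setOf_eq]
        constructor
        · rintro (⟨hg, hgne⟩ | ⟨hg, _⟩)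
          · exact Or.inr ⟨hgne, hg⟩
          · exact Or.inl hg
        · rintro (rfl | ⟨hgne, hg⟩)
          · exact Or.inr ⟨rfl, by rw [Sym2.mem_diagSet, Sym2.isDiag_iff_proj_eq]; exact hab.ne⟩
          · exact Or.inl ⟨hg, hgne⟩
      rw [wSum, wSum, hset, Finset.sum_insert (by
          simp only [Finset.mem_erase, Set.Finite.mem_toFinset]
          rintro ⟨-, hmem⟩
          exact hnab_edge hmem),
        Finset.sum_erase_eq_sub hfmem]
      ring
    have := hmin F'' hSF
    rw [hW] at this
    linarith
  have hfF : f ∈ F.edgeSet := Walk.edges_subset_edgeSet _ hfp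
  obtain ⟨x, y, rfl⟩ : ∃ x y, f = s(x, y) := by
    induction f using Sym2.ind with | _ x y => exact ⟨x, y, rfl⟩
  have hFxy : F.Adj x y := hfF
  rcases walk_split _ hp.isTrail hfp with ⟨hq, hr⟩ | ⟨hq, hr⟩
  · exact key x y hFxy hwf hq hr
  · refine key y x hFxy.symm ?_ ?_ ?_
    · rwa [(Sym2.eq_swap : s(y, x) = s(x, y))]
    · obtain ⟨q, hq⟩ := hq
      exact ⟨q, by rwa [(Sym2.eq_swap : s(y, x) = s(x, y))]⟩
    · obtain ⟨r, hr⟩ := hr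
      exact ⟨r, by rwa [(Sym2.eq_swap : s(y, x) = s(x, y))]⟩


private lemma msf_level [Fintype V] {G F : SimpleGraph V} {w : Sym2 V → ℝ}
    (hF : IsMSF w G F) (t : ℝ) :
    IsSpanningForest (fromEdgeSet {e ∈ G.edgeSet | w e ≤ t})
      (fromEdgeSet {e ∈ F.edgeSet | w e ≤ t}) := by
  refine ⟨?_, ?_, ?_⟩
  · apply fromEdgeSet_mono
    intro g hg
    exact ⟨edgeSet_mono hF.1.1 hg.1, hg.2⟩
  · refine acyclic_anti ?_ hF.1.2.1
    intro u v huv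
    rw [fromEdgeSet_adj] at huv
    exact huv.1.1
  · intro u v h
    refine reachable_of_forall_adj ?_ h
    intro c d hcd
    rw [fromEdgeSet_adj] at hcd
    obtain ⟨⟨hcdG, hcdw⟩, hne⟩ := hcd
    obtain ⟨p, hp⟩ := msf_adj_reachable hF ((mem_edgeSet (G := G)).mp hcdG)
    refine ⟨p.transfer _ ?_⟩
    intro g hg
    rw [edgeSet_fromEdgeSet]
    exact ⟨⟨p.edges_subset_edgeSet hg, (hp g hg).trans hcdw⟩,
      F.not_isDiag_of_mem_edgeSet (p.edges_subset_edgeSet hg)⟩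

private lemma level_count [Fintype V] {G F : SimpleGraph V} {w : Sym2 V → ℝ}
    (hF : IsMSF w G F) (t : ℝ) :
    Nat.card (fromEdgeSet {e ∈ G.edgeSet | w e ≤ t}).ConnectedComponent
      + (Set.toFinite {e ∈ F.edgeSet | w e ≤ t}).toFinset.card
      = Fintype.card V := by
  have hsf := msf_level hF t
  have hcc := cc_card_eq_of_spanning hsf
  have hset : (Set.toFinite (fromEdgeSet {e ∈ F.edgeSet | w e ≤ t}).edgeSet).toFinset
      = (Set.toFinite {e ∈ F.edgeSet | w e ≤ t}).toFinset := by
    ext g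
    simp only [Set.Finite.mem_toFinset, edgeSet_fromEdgeSet, Set.mem_diff,
      Set.mem_setOf_eq, Set.mem_sep_iff]
    constructor
    · rintro ⟨⟨h1, h2⟩, -⟩; exact ⟨h1, h2⟩
    · rintro ⟨h1, h2⟩; exact ⟨⟨h1, h2⟩, F.not_isDiag_of_mem_edgeSet h1⟩
  have hfc := forest_card ((Set.toFinite {e ∈ F.edgeSet | w e ≤ t}).toFinset.card)
    (fromEdgeSet {e ∈ F.edgeSet | w e ≤ t}) hsf.2.1 (by rw [hset])
  rw [hcc] at hfc
  exact hfc

private lemma sum_Icc_one (h : ℕ → ℝ) (N : ℕ) :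
    ∑ i ∈ Finset.Icc 1 N, h i = ∑ j ∈ Finset.range N, h (j + 1) := by
  induction N with
  | zero => simp
  | succ n ih => rw [Finset.sum_Icc_succ_top (by omega), ih, Finset.sum_range_succ]

/-- Approximating the MSF weight from connected-component counts: for a graph with
edge weights in `[1, W]`, the MSF weight is at most
`(n - cc(G₀)) + ∑_{i ≥ 1} (cc(G_{i-1}) - cc(G_i)) (1+ε)^i`, which in turn is at most
`(1 + ε)` times the MSF weight. (The sum is truncated at any `N` with `W ≤ (1+ε)^N`,
beyond which all terms vanish.) -/
theorem approx_msf_weight [Fintype V]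
    (G : SimpleGraph V) (w : Sym2 V → ℝ) (W : ℝ)
    (hw : ∀ e ∈ G.edgeSet, 1 ≤ w e ∧ w e ≤ W)
    (ε : ℝ) (hε : 0 < ε) (N : ℕ) (hN : W ≤ (1 + ε) ^ N)
    (F : SimpleGraph V) (hF : IsMSF w G F) :
    wSum w F ≤
      ((Fintype.card V : ℝ) - ccR (levelGraph G w ε 0)) +
        ∑ i ∈ Finset.Icc 1 N,
          (ccR (levelGraph G w ε (i - 1)) - ccR (levelGraph G w ε i)) * (1 + ε) ^ i ∧
    ((Fintype.card V : ℝ) - ccR (levelGraph G w ε 0)) +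
        ∑ i ∈ Finset.Icc 1 N,
          (ccR (levelGraph G w ε (i - 1)) - ccR (levelGraph G w ε i)) * (1 + ε) ^ i ≤
      (1 + ε) * wSum w F := by
  classical
  set n : ℝ := (Fintype.card V : ℝ) with hn
  set S : Finset (Sym2 V) := (Set.toFinite F.edgeSet).toFinset with hS
  set A : ℕ → Finset (Sym2 V) :=
    fun i => (Set.toFinite {e ∈ F.edgeSet | w e ≤ (1 + ε) ^ i}).toFinset with hA
  set a : ℕ → ℝ := fun i => ((A i).card : ℝ) with ha
  have hAmem : ∀ i g, g ∈ A i ↔ g ∈ F.edgeSet ∧ w g ≤ (1 + ε) ^ i := by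
    intro i g
    rw [hA, Set.Finite.mem_toFinset, Set.mem_sep_iff]
  have hSmem : ∀ g, g ∈ S ↔ g ∈ F.edgeSet := by
    intro g; rw [hS, Set.Finite.mem_toFinset]
  have hSfacts : ∀ g ∈ S, 1 ≤ w g ∧ w g ≤ (1 + ε) ^ N := by
    intro g hg
    have hgG : g ∈ G.edgeSet := edgeSet_mono hF.1.1 ((hSmem g).mp hg)
    exact ⟨(hw g hgG).1, le_trans (hw g hgG).2 hN⟩
  have h1ε : (1 : ℝ) ≤ 1 + ε := by linarith
  have hmono : ∀ i, A i ⊆ A (i + 1) := by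
    intro i g hg
    rw [hAmem] at hg ⊢
    exact ⟨hg.1, hg.2.trans (pow_le_pow_right₀ h1ε (Nat.le_succ i))⟩
  have hAS : ∀ i, A i ⊆ S := by
    intro i g hg
    rw [hAmem] at hg
    exact (hSmem g).mpr hg.1
  have hAN : A N = S := by
    ext g
    rw [hAmem, hSmem]
    exact ⟨fun h => h.1, fun h => ⟨h, (hSfacts g ((hSmem g).mpr h)).2⟩⟩
  have hccR : ∀ i, ccR (levelGraph G w ε i) = n - a i := by
    intro i
    have h := level_count hF ((1 + ε) ^ i)
    have h2 := congrArg (Nat.cast : ℕ → ℝ) h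
    push_cast at h2
    rw [ccR]
    show (Nat.card (fromEdgeSet {e ∈ G.edgeSet | w e ≤ (1 + ε) ^ i}).ConnectedComponent : ℝ)
      = n - a i
    rw [ha, hn]
    linarith
  have hdecomp : ∀ g : Sym2 V → ℝ, ∑ e ∈ S, g e
      = ∑ e ∈ A 0, g e + ∑ j ∈ Finset.range N, ∑ e ∈ A (j + 1) \ A j, g e := by
    intro g
    have h1 : ∀ j ∈ Finset.range N, ∑ e ∈ A (j + 1) \ A j, g e
        = (∑ e ∈ A (j + 1), g e) - ∑ e ∈ A j, g e := fun j _ =>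
      Finset.sum_sdiff_eq_sub (hmono j)
    rw [Finset.sum_congr rfl h1, Finset.sum_range_sub (fun j => ∑ e ∈ A j, g e), hAN]
    ring
  have hcard_sdiff : ∀ j, ((A (j + 1) \ A j).card : ℝ) = a (j + 1) - a j := by
    intro j
    rw [Finset.card_sdiff_of_subset (hmono j), Nat.cast_sub (Finset.card_le_card (hmono j))]
  have hQ : ((Fintype.card V : ℝ) - ccR (levelGraph G w ε 0)) +
        ∑ i ∈ Finset.Icc 1 N,
          (ccR (levelGraph G w ε (i - 1)) - ccR (levelGraph G w ε i)) * (1 + ε) ^ i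
      = ∑ e ∈ A 0, (1 : ℝ)
        + ∑ j ∈ Finset.range N, ∑ _e ∈ A (j + 1) \ A j, (1 + ε) ^ (j + 1) := by
    have hterm : ∀ i : ℕ, (ccR (levelGraph G w ε (i - 1)) - ccR (levelGraph G w ε i))
        * (1 + ε) ^ i = (a i - a (i - 1)) * (1 + ε) ^ i := by
      intro i
      rw [hccR (i - 1), hccR i]
      ring
    rw [hccR 0, Finset.sum_congr rfl (fun i _ => hterm i),
      sum_Icc_one (fun i => (a i - a (i - 1)) * (1 + ε) ^ i) N]
    have hone : (∑ _e ∈ A 0, (1 : ℝ)) = a 0 := by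
      rw [Finset.sum_const, nsmul_eq_mul, mul_one]
    congr 1
    · rw [hone, ← hn]
      ring
    · refine Finset.sum_congr rfl fun j _ => ?_
      rw [Finset.sum_const, nsmul_eq_mul, hcard_sdiff j, Nat.add_sub_cancel]
  have hwSum : wSum w F = ∑ e ∈ S, w e := rfl
  constructor
  · rw [hQ, hwSum, hdecomp w]
    apply add_le_add
    · apply Finset.sum_le_sum
      intro e he
      have := ((hAmem 0 e).mp he).2
      rwa [pow_zero] at this
    · apply Finset.sum_le_sum
      intro j _
      apply Finset.sum_le_sum
      intro e he
      exact ((hAmem (j + 1) e).mp (Finset.mem_sdiff.mp he).1).2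
  · rw [hQ, hwSum, hdecomp w, mul_add, Finset.mul_sum]
    have hrange : ∀ j ∈ Finset.range N,
        ∑ _e ∈ A (j + 1) \ A j, ((1 : ℝ) + ε) ^ (j + 1)
          ≤ (1 + ε) * ∑ e ∈ A (j + 1) \ A j, w e := by
      intro j _
      rw [Finset.mul_sum]
      apply Finset.sum_le_sum
      intro e he
      rw [Finset.mem_sdiff] at he
      have h2 : ¬ w e ≤ (1 + ε) ^ j := fun hc =>
        he.2 ((hAmem j e).mpr ⟨((hAmem (j + 1) e).mp he.1).1, hc⟩)
      push_neg at h2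
      rw [pow_succ]
      nlinarith [pow_pos (show (0:ℝ) < 1 + ε by linarith) j]
    apply add_le_add
    · apply Finset.sum_le_sum
      intro e he
      have h1 := (hSfacts e (hAS 0 he)).1
      nlinarith
    · calc ∑ j ∈ Finset.range N, ∑ _e ∈ A (j + 1) \ A j, ((1:ℝ) + ε) ^ (j + 1)
          ≤ ∑ j ∈ Finset.range N, (1 + ε) * ∑ e ∈ A (j + 1) \ A j, w e :=
            Finset.sum_le_sum hrange
        _ = (1 + ε) * ∑ j ∈ Finset.range N, ∑ e ∈ A (j + 1) \ A j, w e := by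
            rw [Finset.mul_sum]
end

section
/- Let G be a graph and F₁, F₂, ..., F_k a maximal spanning forest decomposition of order k, i.e., F_i is a maximal spanning forest of G \ (F₁ ∪ ... ∪ F_{i-1}). If vertices u and v are connected in F_i, then there exist at least i pairwise edge-disjoint u-v paths in G. -/
open SimpleGraph

variable {V : Type*}

/-- `F 0, F 1, ..., F (k-1)` is a maximal spanning forest decomposition of `G` of
order `k` (0-indexed): `F i` is a maximal spanning forest of `G` minus the edges of
`F 0, ..., F (i-1)`. -/
def IsMSFDecomp (G : SimpleGraph V) (k : ℕ) (F : ℕ → SimpleGraph V) : Prop :=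
  ∀ i < k, IsSpanningForest (G \ ⨆ j ∈ Finset.range i, F j) (F i)

/-- There exist `m` pairwise edge-disjoint paths from `u` to `v` in `G`. -/
def EdgeDisjointPaths (G : SimpleGraph V) (u v : V) (m : ℕ) : Prop :=
  ∃ P : Fin m → G.Walk u v, (∀ j, (P j).IsPath) ∧
    ∀ j₁ j₂ : Fin m, j₁ ≠ j₂ → ∀ e ∈ (P j₁).edges, e ∉ (P j₂).edges

/-- In a maximal spanning forest decomposition, if `u` and `v` are connected in the
`(i+1)`-st forest `F i`, then there are at least `i + 1` pairwise edge-disjoint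
`u`-`v` paths in `G`. -/
theorem msfd_connectivity (G : SimpleGraph V) (k : ℕ) (F : ℕ → SimpleGraph V)
    (hF : IsMSFDecomp G k F) :
    ∀ i < k, ∀ u v : V, (F i).Reachable u v → EdgeDisjointPaths G u v (i + 1) := by
  classical
  intro i hik u v huv
  -- edge sets of the forests are pairwise disjoint
  have hdisj : ∀ a b : ℕ, a < b → b < k →
      ∀ e, e ∈ (F a).edgeSet → e ∉ (F b).edgeSet := by
    intro a b hab hbk e hea heb
    have hb : F b ≤ G \ ⨆ l ∈ Finset.range b, F l := (hF b hbk).1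
    have h1 : e ∈ (G \ ⨆ l ∈ Finset.range b, F l).edgeSet := edgeSet_mono hb heb
    have h2 : e ∈ (⨆ l ∈ Finset.range b, F l).edgeSet := by
      have : F a ≤ ⨆ l ∈ Finset.range b, F l :=
        le_iSup₂ (f := fun l (_ : l ∈ Finset.range b) => F l) a (Finset.mem_range.mpr hab)
      exact edgeSet_mono this hea
    rw [edgeSet_sdiff] at h1
    exact h1.2 h2
  -- reachability in every earlier forest
  have hreach : ∀ j ≤ i, (F j).Reachable u v := by
    intro j hj
    have hjk : j < k := lt_of_le_of_lt hj hik
    have hsup : (⨆ l ∈ Finset.range j, F l) ≤ ⨆ l ∈ Finset.range i, F l := by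
      apply biSup_mono
      intro l hl
      exact Finset.mem_range.mpr (lt_of_lt_of_le (Finset.mem_range.mp hl) hj)
    have h1 : F i ≤ G \ ⨆ l ∈ Finset.range j, F l :=
      (hF i hik).1.trans (sdiff_le_sdiff_left hsup)
    exact (hF j hjk).2.2 u v (huv.mono h1)
  -- pick, for each j ≤ i, a path in F j and transfer it to G
  have key : ∀ j : Fin (i + 1), ∃ p : G.Walk u v, p.IsPath ∧
      ∀ e ∈ p.edges, e ∈ (F (j : ℕ)).edgeSet := by
    intro j
    have hji : (j : ℕ) ≤ i := Nat.lt_succ_iff.mp j.2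
    obtain ⟨w⟩ := hreach j hji
    have hle : F (j : ℕ) ≤ G :=
      ((hF j (lt_of_le_of_lt hji hik)).1).trans sdiff_le
    set q : (F (j : ℕ)).Walk u v := (w.toPath : (F (j : ℕ)).Path u v).1
    have hq : ∀ e ∈ q.edges, e ∈ G.edgeSet :=
      fun e he => edgeSet_mono hle (q.edges_subset_edgeSet he)
    refine ⟨q.transfer G hq, (w.toPath.2).transfer hq, ?_⟩
    intro e he
    rw [q.edges_transfer hq] at he
    exact q.edges_subset_edgeSet he
  choose P hP hPe using key
  refine ⟨P, hP, ?_⟩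
  intro j₁ j₂ hne e he₁ he₂
  have h1 := hPe j₁ e he₁
  have h2 := hPe j₂ e he₂
  have hk₁ : (j₁ : ℕ) < k := lt_of_le_of_lt (Nat.lt_succ_iff.mp j₁.2) hik
  have hk₂ : (j₂ : ℕ) < k := lt_of_le_of_lt (Nat.lt_succ_iff.mp j₂.2) hik
  rcases lt_or_gt_of_ne (fun h => hne (Fin.ext h)) with h | h
  · exact hdisj _ _ h hk₂ e h1 h2
  · exact hdisj _ _ h hk₁ e h2 h1
end

section
/- Let F₁, ..., F_k be a maximal spanning forest decomposition of G of order k, and let H = F₁ ∪ ... ∪ F_k. Then for every pair of vertices u, v: u and v are k-edge-connected in H if and only if u and v are k-edge-connected in G. -/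
open SimpleGraph

variable {V : Type*}

namespace MengerAux

set_option linter.unusedSectionVars false

variable [DecidableEq V]

/-- out-degree of `w` in a finite arc set. -/
def outd (D : Finset (V × V)) (w : V) : ℕ := (D.filter fun p => p.1 = w).card

/-- in-degree of `w` in a finite arc set. -/
def ind (D : Finset (V × V)) (w : V) : ℕ := (D.filter fun p => p.2 = w).card

/-- A unit-capacity integral flow from `u` to `v` of value `n`, as a finite set of arcs. -/
structure IsFlow (H : SimpleGraph V) (u v : V) (n : ℕ) (D : Finset (V × V)) : Prop where
  adj : ∀ p ∈ D, H.Adj p.1 p.2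
  noswap : ∀ p ∈ D, (p.2, p.1) ∉ D
  cons : ∀ w, w ≠ u → w ≠ v → outd D w = ind D w
  val : outd D u = ind D u + n

section lists

/-- From reflexive-transitive closure, extract a duplicate-free chain. -/
theorem chain_suffix {r : V → V → Prop} :
    ∀ (L : List V) (x : V), List.Chain r x L → (x :: L).Nodup → ∀ a ∈ x :: L,
      ∃ M : List V, List.Chain r a M ∧
        (a :: M).getLast (List.cons_ne_nil _ _) = (x :: L).getLast (List.cons_ne_nil _ _) ∧
        (a :: M).Nodup := by
  intro L
  induction L with
  | nil =>
    intro x _ hn a ha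
    simp only [List.mem_singleton] at ha
    subst ha
    exact ⟨[], List.Chain.nil, rfl, hn⟩
  | cons y L' ih =>
    intro x hc hn a ha
    simp only [List.Chain, List.chain_cons] at hc
    rcases List.mem_cons.1 ha with h1 | h2
    · subst h1
      exact ⟨y :: L', List.chain_cons.2 hc, rfl, hn⟩
    · obtain ⟨M, hM1, hM2, hM3⟩ := ih y hc.2 (List.Nodup.of_cons hn) a h2
      exact ⟨M, hM1, by rw [hM2, List.getLast_cons_cons], hM3⟩

theorem exists_nodup_chain {r : V → V → Prop} {u v : V} (h : Relation.ReflTransGen r u v) :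
    ∃ L : List V, List.Chain r u L ∧ (u :: L).getLast (List.cons_ne_nil _ _) = v ∧
      (u :: L).Nodup := by
  induction h using Relation.ReflTransGen.head_induction_on with
  | refl => exact ⟨[], List.Chain.nil, rfl, List.nodup_singleton _⟩
  | head hac _ ih =>
    rename_i a c _
    obtain ⟨L, hL1, hL2, hL3⟩ := ih
    by_cases ha : a ∈ c :: L
    · obtain ⟨M, hM1, hM2, hM3⟩ := chain_suffix L c hL1 hL3 a ha
      exact ⟨M, hM1, by rw [hM2, hL2], hM3⟩
    · exact ⟨c :: L, List.Chain.cons hac hL1, by rw [List.getLast_cons_cons, hL2],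
        List.nodup_cons.2 ⟨ha, hL3⟩⟩

theorem chain_zip_mem {r : V → V → Prop} :
    ∀ (L : List V) (x : V), List.Chain r x L → ∀ p ∈ (x :: L).zip L, r p.1 p.2 := by
  intro L
  induction L with
  | nil => intro x _ p hp; simp at hp
  | cons y L' ih =>
    intro x hc p hp
    simp only [List.Chain, List.chain_cons] at hc
    rcases List.mem_cons.1 hp with h1 | h2
    · subst h1; exact hc.1
    · exact ih y hc.2 p h2

theorem zip_mem_of_mem_cons {L : List V} {x : V} {p : V × V} (hp : p ∈ (x :: L).zip L) :
    p.1 ∈ x :: L ∧ p.2 ∈ L := by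
  obtain ⟨a, b⟩ := p
  exact List.of_mem_zip hp

/-- Build a walk from a chain of adjacencies, remembering its edges. -/
theorem exists_walk_of_chain (H : SimpleGraph V) :
    ∀ (L : List V) (x z : V), List.Chain H.Adj x L →
      (x :: L).getLast (List.cons_ne_nil _ _) = z →
      ∃ W : H.Walk x z,
        ∀ e ∈ W.edges, ∃ p ∈ (x :: L).zip L, e = s(p.1, p.2) := by
  intro L
  induction L with
  | nil =>
    intro x z _ hz
    simp only [List.getLast_singleton] at hz
    subst hz
    exact ⟨Walk.nil, by simp⟩
  | cons y L' ih =>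
    intro x z hc hz
    simp only [List.Chain, List.chain_cons] at hc
    rw [List.getLast_cons_cons] at hz
    obtain ⟨W', hW'⟩ := ih y z hc.2 hz
    refine ⟨Walk.cons hc.1 W', ?_⟩
    intro e he
    rw [Walk.edges_cons, List.mem_cons] at he
    rcases he with h1 | h2
    · exact ⟨(x, y), List.mem_cons_self, h1⟩
    · obtain ⟨p, hp1, hp2⟩ := hW' e h2
      exact ⟨p, List.mem_cons_of_mem _ hp1, hp2⟩

end lists

section counting

theorem outd_le {D : Finset (V × V)} {p : V × V} (hp : p ∈ D) : 1 ≤ outd D p.1 :=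
  Finset.card_pos.2 ⟨p, Finset.mem_filter.2 ⟨hp, rfl⟩⟩

theorem ind_le {D : Finset (V × V)} {p : V × V} (hp : p ∈ D) : 1 ≤ ind D p.2 :=
  Finset.card_pos.2 ⟨p, Finset.mem_filter.2 ⟨hp, rfl⟩⟩

theorem outd_insert {D : Finset (V × V)} {p : V × V} (hp : p ∉ D) (w : V) :
    outd (insert p D) w = outd D w + (if p.1 = w then 1 else 0) := by
  unfold outd
  rw [Finset.filter_insert]
  split_ifs with h
  · rw [Finset.card_insert_of_notMem fun hm => hp (Finset.mem_of_mem_filter _ hm)]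
  · omega

theorem ind_insert {D : Finset (V × V)} {p : V × V} (hp : p ∉ D) (w : V) :
    ind (insert p D) w = ind D w + (if p.2 = w then 1 else 0) := by
  unfold ind
  rw [Finset.filter_insert]
  split_ifs with h
  · rw [Finset.card_insert_of_notMem fun hm => hp (Finset.mem_of_mem_filter _ hm)]
  · omega

theorem outd_erase {D : Finset (V × V)} {p : V × V} (hp : p ∈ D) (w : V) :
    outd (D.erase p) w + (if p.1 = w then 1 else 0) = outd D w := by
  unfold outd
  rw [Finset.filter_erase]
  split_ifs with h
  · rw [Finset.card_erase_of_mem (Finset.mem_filter.2 ⟨hp, h⟩)]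
    have : 1 ≤ (D.filter fun q => q.1 = w).card :=
      Finset.card_pos.2 ⟨p, Finset.mem_filter.2 ⟨hp, h⟩⟩
    omega
  · have hpm : p ∉ D.filter fun q => q.1 = w := fun hm => h (Finset.mem_filter.1 hm).2
    rw [Finset.erase_eq_of_notMem hpm]
    omega

theorem ind_erase {D : Finset (V × V)} {p : V × V} (hp : p ∈ D) (w : V) :
    ind (D.erase p) w + (if p.2 = w then 1 else 0) = ind D w := by
  unfold ind
  rw [Finset.filter_erase]
  split_ifs with h
  · rw [Finset.card_erase_of_mem (Finset.mem_filter.2 ⟨hp, h⟩)]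
    have : 1 ≤ (D.filter fun q => q.2 = w).card :=
      Finset.card_pos.2 ⟨p, Finset.mem_filter.2 ⟨hp, h⟩⟩
    omega
  · have hpm : p ∉ D.filter fun q => q.2 = w := fun hm => h (Finset.mem_filter.1 hm).2
    rw [Finset.erase_eq_of_notMem hpm]
    omega

/-- Global cut counting: net flow across any `u`-`v` cut equals the value. -/
theorem flow_cut_count {H : SimpleGraph V} {u v : V} {n : ℕ} {D : Finset (V × V)}
    (hf : IsFlow H u v n D) (R : Set V) [DecidablePred (· ∈ R)] (hu : u ∈ R) (hv : v ∉ R) :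
    (D.filter fun p => p.1 ∈ R ∧ p.2 ∉ R).card
      = (D.filter fun p => p.1 ∉ R ∧ p.2 ∈ R).card + n := by
  classical
  set T : Finset V := (D.image Prod.fst ∪ D.image Prod.snd) ∪ {u} with hT
  set RT : Finset V := T.filter (· ∈ R) with hRT
  have key : ∀ f : V × V → V, (∀ p ∈ D, f p ∈ T) →
      ∑ w ∈ RT, (D.filter fun p => f p = w).card = (D.filter fun p => f p ∈ R).card := by
    intro f hf
    calc ∑ w ∈ RT, (D.filter fun p => f p = w).card
        = ∑ w ∈ RT, ∑ p ∈ D, if f p = w then 1 else 0 :=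
          Finset.sum_congr rfl fun w _ => Finset.card_filter _ _
      _ = ∑ p ∈ D, ∑ w ∈ RT, if f p = w then 1 else 0 := Finset.sum_comm
      _ = ∑ p ∈ D, if f p ∈ RT then 1 else 0 := by
          refine Finset.sum_congr rfl fun p _ => ?_
          rw [Finset.sum_ite_eq RT (f p) fun _ => 1]
      _ = (D.filter fun p => f p ∈ R).card := by
          rw [Finset.card_filter]
          refine Finset.sum_congr rfl fun p hp => ?_
          congr 1
          rw [hRT, Finset.mem_filter]
          simp only [eq_iff_iff]
          exact ⟨fun h => h.2, fun h => ⟨hf p hp, h⟩⟩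
  have h1 : ∑ w ∈ RT, outd D w = (D.filter fun p => p.1 ∈ R).card :=
    key Prod.fst fun p hp =>
      Finset.mem_union.2 (Or.inl (Finset.mem_union.2 (Or.inl
        (Finset.mem_image_of_mem Prod.fst hp))))
  have h2 : ∑ w ∈ RT, ind D w = (D.filter fun p => p.2 ∈ R).card :=
    key Prod.snd fun p hp =>
      Finset.mem_union.2 (Or.inl (Finset.mem_union.2 (Or.inr
        (Finset.mem_image_of_mem Prod.snd hp))))
  have hu' : u ∈ RT := by
    rw [hRT, Finset.mem_filter]
    exact ⟨by simp [hT], hu⟩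
  have h3 : ∑ w ∈ RT, outd D w = (∑ w ∈ RT, ind D w) + n := by
    rw [← Finset.add_sum_erase _ _ hu', ← Finset.add_sum_erase _ _ hu', hf.val]
    have : ∑ w ∈ RT.erase u, outd D w = ∑ w ∈ RT.erase u, ind D w := by
      refine Finset.sum_congr rfl fun w hw => ?_
      have hwu : w ≠ u := (Finset.mem_erase.1 hw).1
      have hwR : w ∈ R := (Finset.mem_filter.1 (Finset.mem_of_mem_erase hw)).2
      have hwv : w ≠ v := fun h => hv (h ▸ hwR)
      exact hf.cons w hwu hwv
    omega
  have h4 : (D.filter fun p => p.1 ∈ R).card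
      = (D.filter fun p => p.1 ∈ R ∧ p.2 ∈ R).card
        + (D.filter fun p => p.1 ∈ R ∧ p.2 ∉ R).card := by
    rw [← Finset.filter_filter, ← Finset.filter_filter]
    exact (Finset.card_filter_add_card_filter_not (fun (p : V × V) => p.2 ∈ R)).symm
  have h5 : (D.filter fun p => p.2 ∈ R).card
      = (D.filter fun p => p.1 ∈ R ∧ p.2 ∈ R).card
        + (D.filter fun p => p.1 ∉ R ∧ p.2 ∈ R).card := by
    have e1 : (D.filter fun p => p.1 ∈ R ∧ p.2 ∈ R)
        = (D.filter fun p => p.2 ∈ R).filter fun p => p.1 ∈ R := by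
      rw [Finset.filter_filter]
      exact Finset.filter_congr fun p _ => and_comm
    have e2 : (D.filter fun p => p.1 ∉ R ∧ p.2 ∈ R)
        = (D.filter fun p => p.2 ∈ R).filter fun p => p.1 ∉ R := by
      rw [Finset.filter_filter]
      exact Finset.filter_congr fun p _ => and_comm
    rw [e1, e2]
    exact (Finset.card_filter_add_card_filter_not (fun (p : V × V) => p.1 ∈ R)).symm
  omega

end counting

section augment

/-- Augmenting along a residual path, one arc at a time. -/
theorem augment_aux (H : SimpleGraph V) (u v : V) (n : ℕ) (huv : u ≠ v) :
    ∀ (L : List V) (x : V) (D : Finset (V × V)),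
      (x :: L).Nodup → (u ∈ x :: L → x = u) →
      ((x :: L).getLast (List.cons_ne_nil _ _) = v) →
      (∀ p ∈ (x :: L).zip L, H.Adj p.1 p.2 ∧ p ∉ D) →
      (∀ p ∈ D, H.Adj p.1 p.2) → (∀ p ∈ D, (p.2, p.1) ∉ D) →
      (∀ w, w ≠ u → w ≠ v → w ≠ x → outd D w = ind D w) →
      (outd D u + (if x = u then 1 else 0) = ind D u + (n + 1)) →
      (x ≠ u → x ≠ v → ind D x = outd D x + 1) →
      ∃ D', IsFlow H u v (n + 1) D' := by
  intro L
  induction L with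
  | nil =>
    intro x D hnd hu hlast harc hadj hns hcons hval hexc
    have hx : x = v := hlast
    have hxu : x ≠ u := by intro h; rw [h] at hx; exact huv hx
    rw [if_neg hxu] at hval
    exact ⟨D, ⟨hadj, hns, fun w h1 h2 => hcons w h1 h2 (fun hwx => h2 (hwx.trans hx)),
      by omega⟩⟩
  | cons y L' ih =>
    intro x D hnd hu hlast harc hadj hns hcons hval hexc
    have hzip : (x :: y :: L').zip (y :: L') = (x, y) :: ((y :: L').zip L') := rfl
    rw [hzip] at harc
    have hxy := harc (x, y) (List.mem_cons_self)
    have hxmem : x ∉ y :: L' := (List.nodup_cons.1 hnd).1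
    have hxny : x ≠ y := fun h => hxmem (h ▸ List.mem_cons_self)
    have hlast' : (y :: L').getLast (List.cons_ne_nil _ _) = v := by
      rwa [List.getLast_cons_cons] at hlast
    have hvmem : v ∈ y :: L' := hlast' ▸ List.getLast_mem _
    have hxv : x ≠ v := fun h => hxmem (h ▸ hvmem)
    have hunotin : u ∉ y :: L' := by
      intro hmem
      exact hxmem ((hu (List.mem_cons_of_mem _ hmem)) ▸ hmem)
    have hyu : y ≠ u := fun h => hunotin (h ▸ List.mem_cons_self)
    have harc' : ∀ p ∈ (y :: L').zip L', H.Adj p.1 p.2 ∧ p ∉ D :=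
      fun p hp => harc p (List.mem_cons_of_mem _ hp)
    have hcomp : ∀ p ∈ (y :: L').zip L', p.1 ≠ x ∧ p.2 ≠ x := by
      intro p hp
      obtain ⟨h1, h2⟩ := zip_mem_of_mem_cons hp
      exact ⟨fun h => hxmem (h ▸ h1), fun h => hxmem (h ▸ List.mem_cons_of_mem _ h2)⟩
    have hnd' : (y :: L').Nodup := List.Nodup.of_cons hnd
    have hu' : u ∈ y :: L' → y = u := fun hm => absurd hm hunotin
    by_cases hyx : (y, x) ∈ D
    · -- push back: erase the reverse arc
      refine ih y (D.erase (y, x)) hnd' hu' hlast' ?_ ?_ ?_ ?_ ?_ ?_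
      · intro p hp
        exact ⟨(harc' p hp).1, fun hm => (harc' p hp).2 (Finset.mem_of_mem_erase hm)⟩
      · exact fun p hp => hadj p (Finset.mem_of_mem_erase hp)
      · intro p hp hsw
        exact hns p (Finset.mem_of_mem_erase hp) (Finset.mem_of_mem_erase hsw)
      · intro w hwu hwv hwy
        have o := outd_erase hyx w
        have i := ind_erase hyx w
        by_cases hwx : w = x
        · subst hwx
          rw [if_neg (fun h => hxny h.symm)] at o
          rw [if_pos rfl] at i
          have he := hexc (fun h => hwu h) hwv
          omega
        · rw [if_neg (fun h => hwy h.symm)] at o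
          rw [if_neg (fun h => hwx h.symm)] at i
          have := hcons w hwu hwv hwx
          omega
      · have o := outd_erase hyx u
        have i := ind_erase hyx u
        rw [if_neg hyu] at o ⊢
        by_cases hxu : x = u
        · rw [if_pos hxu] at i
          rw [if_pos hxu] at hval
          omega
        · rw [if_neg hxu] at i
          rw [if_neg hxu] at hval
          omega
      · intro hyu' hyv
        have o := outd_erase hyx y
        have i := ind_erase hyx y
        rw [if_pos rfl] at o
        rw [if_neg (fun h => hxny h)] at i
        have h1 := outd_le hyx
        have := hcons y hyu' hyv (fun h => hxny h.symm)
        omega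
    · -- push forward: insert the arc (x, y)
      have hxyD : (x, y) ∉ D := hxy.2
      refine ih y (insert (x, y) D) hnd' hu' hlast' ?_ ?_ ?_ ?_ ?_ ?_
      · intro p hp
        refine ⟨(harc' p hp).1, ?_⟩
        intro hm
        rcases Finset.mem_insert.1 hm with h1 | h2
        · exact (hcomp p hp).1 (by rw [h1])
        · exact (harc' p hp).2 h2
      · intro p hp
        rcases Finset.mem_insert.1 hp with h1 | h2
        · rw [h1]; exact hxy.1
        · exact hadj p h2
      · intro p hp hsw
        rcases Finset.mem_insert.1 hp with h1 | h2
        · rcases Finset.mem_insert.1 hsw with h3 | h4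
          · rw [h1] at h3
            exact hxny (congrArg Prod.fst h3).symm
          · rw [h1] at h4
            exact hyx h4
        · rcases Finset.mem_insert.1 hsw with h3 | h4
          · apply hyx
            have hp1 : p.1 = y := congrArg Prod.snd h3
            have hp2 : p.2 = x := congrArg Prod.fst h3
            have hpe : p = (y, x) := by
              cases p
              simp_all
            rwa [hpe] at h2
          · exact hns p h2 h4
      · intro w hwu hwv hwy
        have o := outd_insert hxyD w
        have i := ind_insert hxyD w
        by_cases hwx : w = x
        · subst hwx
          rw [if_pos rfl] at o
          rw [if_neg (fun h => hxny h.symm)] at i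
          have he := hexc (fun h => hwu h) hwv
          omega
        · rw [if_neg (fun h => hwx h.symm)] at o
          rw [if_neg (fun h => hwy h.symm)] at i
          have := hcons w hwu hwv hwx
          omega
      · have o := outd_insert hxyD u
        have i := ind_insert hxyD u
        rw [if_neg hyu] at i ⊢
        by_cases hxu : x = u
        · rw [if_pos hxu] at o
          rw [if_pos hxu] at hval
          omega
        · rw [if_neg hxu] at o
          rw [if_neg hxu] at hval
          omega
      · intro hyu' hyv
        have o := outd_insert hxyD y
        have i := ind_insert hxyD y
        rw [if_neg hxny] at o
        rw [if_pos rfl] at i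
        have := hcons y hyu' hyv (fun h => hxny h.symm)
        omega

theorem augment {H : SimpleGraph V} {u v : V} {n : ℕ} {D : Finset (V × V)} (huv : u ≠ v)
    (hf : IsFlow H u v n D)
    (hreach : Relation.ReflTransGen (fun a b => H.Adj a b ∧ (a, b) ∉ D) u v) :
    ∃ D', IsFlow H u v (n + 1) D' := by
  obtain ⟨L, hc, hlast, hnd⟩ := exists_nodup_chain hreach
  refine augment_aux H u v n huv L u D hnd (fun _ => rfl) hlast ?_ hf.adj hf.noswap
    (fun w h1 h2 _ => hf.cons w h1 h2) (by rw [if_pos rfl]; have := hf.val; omega)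
    (fun h _ => absurd rfl h)
  intro p hp
  have := chain_zip_mem L u hc p hp
  exact ⟨this.1, by simpa using this.2⟩

theorem exists_boundary {K : SimpleGraph V} {R : Set V} :
    ∀ {x y : V}, K.Walk x y → x ∈ R → y ∉ R → ∃ a b, K.Adj a b ∧ a ∈ R ∧ b ∉ R := by
  intro x y W
  induction W with
  | nil => intro h1 h2; exact absurd h1 h2
  | @cons x m y h W ih =>
    intro hx hy
    by_cases hm : m ∈ R
    · exact ih hm hy
    · exact ⟨x, m, h, hx, hm⟩

/-- If there is no residual path, we get a small edge cut disconnecting `u` from `v`. -/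
theorem cut_of_no_reach {H : SimpleGraph V} {u v : V} {n : ℕ} {D : Finset (V × V)}
    (hf : IsFlow H u v n D)
    (hnr : ¬ Relation.ReflTransGen (fun a b => H.Adj a b ∧ (a, b) ∉ D) u v) :
    ∃ C : Finset (Sym2 V), C.card ≤ n ∧ ¬ (H.deleteEdges ↑C).Reachable u v := by
  classical
  set R : Set V := {x | Relation.ReflTransGen (fun a b => H.Adj a b ∧ (a, b) ∉ D) u x} with hR
  have hu : u ∈ R := Relation.ReflTransGen.refl
  have hv : v ∉ R := hnr
  have hstep : ∀ a b, a ∈ R → H.Adj a b → (a, b) ∉ D → b ∈ R :=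
    fun a b ha hab hD => Relation.ReflTransGen.tail ha ⟨hab, hD⟩
  have hcount := flow_cut_count hf R hu hv
  have hin : (D.filter fun p => p.1 ∉ R ∧ p.2 ∈ R) = ∅ := by
    rw [Finset.filter_eq_empty_iff]
    rintro p hp ⟨h1, h2⟩
    exact h1 (hstep p.2 p.1 h2 (hf.adj p hp).symm (hf.noswap p hp))
  rw [hin, Finset.card_empty, zero_add] at hcount
  refine ⟨(D.filter fun p => p.1 ∈ R ∧ p.2 ∉ R).image (fun p => s(p.1, p.2)),
    hcount ▸ Finset.card_image_le, ?_⟩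
  rintro ⟨W⟩
  obtain ⟨a, b, hab, haR, hbR⟩ := exists_boundary W hu hv
  rw [SimpleGraph.deleteEdges_adj] at hab
  have habD : (a, b) ∈ D := by
    by_contra hD
    exact hbR (hstep a b haR hab.1 hD)
  apply hab.2
  simp only [Finset.coe_image, Set.mem_image, Finset.mem_coe, Finset.mem_filter]
  exact ⟨(a, b), ⟨habD, haR, hbR⟩, rfl⟩

theorem exists_flow {H : SimpleGraph V} {u v : V} {k : ℕ} (huv : u ≠ v)
    (hcut : ∀ C : Finset (Sym2 V), C.card < k → (H.deleteEdges ↑C).Reachable u v) :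
    ∀ n, n ≤ k → ∃ D, IsFlow H u v n D := by
  intro n
  induction n with
  | zero =>
    intro _
    refine ⟨∅, ⟨by simp, by simp, fun w _ _ => rfl, ?_⟩⟩
    simp [outd, ind]
  | succ m ih =>
    intro hm
    obtain ⟨D, hD⟩ := ih (le_of_lt hm)
    by_cases hreach : Relation.ReflTransGen (fun a b => H.Adj a b ∧ (a, b) ∉ D) u v
    · exact augment huv hD hreach
    · obtain ⟨C, hC1, hC2⟩ := cut_of_no_reach hD hreach
      exact absurd (hcut C (lt_of_le_of_lt hC1 hm)) hC2

end augment

section decomp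

theorem decomp_aux (H : SimpleGraph V) (u v : V) (n : ℕ) (huv : u ≠ v) :
    ∀ (L : List V) (x : V) (D : Finset (V × V)),
      (x :: L).Nodup → (u ∈ x :: L → x = u) →
      ((x :: L).getLast (List.cons_ne_nil _ _) = v) →
      (∀ p ∈ (x :: L).zip L, p ∈ D) →
      (∀ p ∈ D, H.Adj p.1 p.2) → (∀ p ∈ D, (p.2, p.1) ∉ D) →
      (∀ w, w ≠ u → w ≠ v → w ≠ x → outd D w = ind D w) →
      (outd D u = ind D u + n + (if x = u then 1 else 0)) →
      (x ≠ u → x ≠ v → outd D x = ind D x + 1) →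
      ∃ D'', IsFlow H u v n D'' ∧ D'' ⊆ D ∧ ∀ p ∈ (x :: L).zip L, p ∉ D'' := by
  intro L
  induction L with
  | nil =>
    intro x D hnd hu hlast harc hadj hns hcons hval hexc
    have hx : x = v := hlast
    have hxu : x ≠ u := by intro h; rw [h] at hx; exact huv hx
    rw [if_neg hxu] at hval
    refine ⟨D, ⟨hadj, hns, fun w h1 h2 => hcons w h1 h2 (fun hwx => h2 (hwx.trans hx)),
      by omega⟩, Finset.Subset.refl _, ?_⟩
    intro p hp
    simp at hp
  | cons y L' ih =>
    intro x D hnd hu hlast harc hadj hns hcons hval hexc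
    have hzip : (x :: y :: L').zip (y :: L') = (x, y) :: ((y :: L').zip L') := rfl
    rw [hzip] at harc ⊢
    have hxyD : (x, y) ∈ D := harc (x, y) (List.mem_cons_self)
    have hxmem : x ∉ y :: L' := (List.nodup_cons.1 hnd).1
    have hxny : x ≠ y := fun h => hxmem (h ▸ List.mem_cons_self)
    have hlast' : (y :: L').getLast (List.cons_ne_nil _ _) = v := by
      rwa [List.getLast_cons_cons] at hlast
    have hvmem : v ∈ y :: L' := hlast' ▸ List.getLast_mem _
    have hxv : x ≠ v := fun h => hxmem (h ▸ hvmem)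
    have hunotin : u ∉ y :: L' := by
      intro hmem
      exact hxmem ((hu (List.mem_cons_of_mem _ hmem)) ▸ hmem)
    have hyu : y ≠ u := fun h => hunotin (h ▸ List.mem_cons_self)
    have harc' : ∀ p ∈ (y :: L').zip L', p ∈ D :=
      fun p hp => harc p (List.mem_cons_of_mem _ hp)
    have hcomp : ∀ p ∈ (y :: L').zip L', p.1 ≠ x ∧ p.2 ≠ x := by
      intro p hp
      obtain ⟨h1, h2⟩ := zip_mem_of_mem_cons hp
      exact ⟨fun h => hxmem (h ▸ h1), fun h => hxmem (h ▸ List.mem_cons_of_mem _ h2)⟩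
    have hnd' : (y :: L').Nodup := List.Nodup.of_cons hnd
    have hu' : u ∈ y :: L' → y = u := fun hm => absurd hm hunotin
    have harcsE : ∀ p ∈ (y :: L').zip L', p ∈ D.erase (x, y) := by
      intro p hp
      exact Finset.mem_erase.2 ⟨fun h => (hcomp p hp).1 (by rw [h]), harc' p hp⟩
    have hadjE : ∀ p ∈ D.erase (x, y), H.Adj p.1 p.2 :=
      fun p hp => hadj p (Finset.mem_of_mem_erase hp)
    have hnsE : ∀ p ∈ D.erase (x, y), (p.2, p.1) ∉ D.erase (x, y) :=
      fun p hp hsw => hns p (Finset.mem_of_mem_erase hp) (Finset.mem_of_mem_erase hsw)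
    have hconsE : ∀ w, w ≠ u → w ≠ v → w ≠ y →
        outd (D.erase (x, y)) w = ind (D.erase (x, y)) w := by
      intro w hwu hwv hwy
      have o := outd_erase hxyD w
      have i := ind_erase hxyD w
      by_cases hwx : w = x
      · subst hwx
        rw [if_pos rfl] at o
        rw [if_neg (fun h => hxny h.symm)] at i
        have he := hexc (fun h => hwu h) hwv
        omega
      · rw [if_neg (fun h => hwx h.symm)] at o
        rw [if_neg (fun h => hwy h.symm)] at i
        have := hcons w hwu hwv hwx
        omega
    have hvalE : outd (D.erase (x, y)) u = ind (D.erase (x, y)) u + n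
        + (if y = u then 1 else 0) := by
      have o := outd_erase hxyD u
      have i := ind_erase hxyD u
      rw [if_neg hyu] at i ⊢
      by_cases hxu : x = u
      · rw [if_pos hxu] at o
        rw [if_pos hxu] at hval
        omega
      · rw [if_neg hxu] at o
        rw [if_neg hxu] at hval
        omega
    have hexcE : y ≠ u → y ≠ v →
        outd (D.erase (x, y)) y = ind (D.erase (x, y)) y + 1 := by
      intro hyu' hyv
      have o := outd_erase hxyD y
      have i := ind_erase hxyD y
      rw [if_neg hxny] at o
      rw [if_pos rfl] at i
      have h1 := ind_le hxyD
      have := hcons y hyu' hyv (fun h => hxny h.symm)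
      omega
    obtain ⟨D'', hf'', hsub, hnotin⟩ := ih y (D.erase (x, y)) hnd' hu' hlast' harcsE
      hadjE hnsE hconsE hvalE hexcE
    refine ⟨D'', hf'', hsub.trans (Finset.erase_subset _ _), ?_⟩
    intro p hp
    rcases List.mem_cons.1 hp with h1 | h2
    · subst h1
      exact fun hm => Finset.notMem_erase _ _ (hsub hm)
    · exact hnotin p h2

/-- Flow decomposition: a flow of value `n` yields `n` pairwise edge-disjoint walks. -/
theorem decomp {H : SimpleGraph V} {u v : V} (huv : u ≠ v) :
    ∀ (n : ℕ) (D : Finset (V × V)), IsFlow H u v n D →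
      ∃ P : Fin n → H.Walk u v,
        (∀ j, ∀ e ∈ (P j).edges, ∃ p ∈ D, e = s(p.1, p.2)) ∧
        (∀ j₁ j₂ : Fin n, j₁ ≠ j₂ → ∀ e ∈ (P j₁).edges, e ∉ (P j₂).edges) := by
  intro n
  induction n with
  | zero =>
    intro D _
    exact ⟨fun j => j.elim0, fun j => j.elim0, fun j => j.elim0⟩
  | succ m ih =>
    intro D hf
    classical
    set R2 : Set V := {x | Relation.ReflTransGen (fun a b => (a, b) ∈ D) u x} with hR2
    have hu2 : u ∈ R2 := Relation.ReflTransGen.refl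
    have hreach : Relation.ReflTransGen (fun a b => (a, b) ∈ D) u v := by
      by_contra hv2
      have hcount := flow_cut_count hf R2 hu2 hv2
      have hout : (D.filter fun p => p.1 ∈ R2 ∧ p.2 ∉ R2) = ∅ := by
        rw [Finset.filter_eq_empty_iff]
        rintro p hp ⟨h1, h2⟩
        exact h2 (Relation.ReflTransGen.tail h1 (by simpa using hp))
      rw [hout, Finset.card_empty] at hcount
      omega
    obtain ⟨L, hc, hlast, hnd⟩ := exists_nodup_chain hreach
    have harcs : ∀ p ∈ (u :: L).zip L, p ∈ D := by
      intro p hp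
      have := chain_zip_mem L u hc p hp
      simpa using this
    have hcadj : List.Chain H.Adj u L := List.Chain.imp
      (fun a b hab => hf.adj (a, b) hab) hc
    obtain ⟨W, hW⟩ := exists_walk_of_chain H L u v hcadj hlast
    obtain ⟨D'', hf'', hsub, hnotin⟩ := decomp_aux H u v m huv L u D hnd (fun _ => rfl)
      hlast harcs hf.adj hf.noswap (fun w h1 h2 _ => hf.cons w h1 h2)
      (by rw [if_pos rfl]; have := hf.val; omega) (fun h _ => absurd rfl h)
    obtain ⟨P', hPD, hPdisj⟩ := ih D'' hf''
    have key : ∀ (i : Fin m) (e : Sym2 V), e ∈ W.edges → e ∈ (P' i).edges → False := by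
      intro i e he1 he2
      obtain ⟨p, hp, hpe⟩ := hW e he1
      obtain ⟨q, hq, hqe⟩ := hPD i e he2
      have hpD : p ∈ D := harcs p hp
      rw [hpe] at hqe
      rw [Sym2.eq_iff] at hqe
      rcases hqe with ⟨h1, h2⟩ | ⟨h1, h2⟩
      · apply hnotin p hp
        have : q = p := by cases p; cases q; simp_all
        rwa [this] at hq
      · apply hf.noswap p hpD
        have : q = (p.2, p.1) := by cases p; cases q; simp_all
        rw [this] at hq
        exact hsub hq
    refine ⟨Fin.cons W P', ?_, ?_⟩
    · intro j
      rcases Fin.eq_zero_or_eq_succ j with rfl | ⟨i, rfl⟩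
      · intro e he
        rw [Fin.cons_zero] at he
        obtain ⟨p, hp, hpe⟩ := hW e he
        exact ⟨p, harcs p hp, hpe⟩
      · intro e he
        rw [Fin.cons_succ] at he
        obtain ⟨p, hp, hpe⟩ := hPD i e he
        exact ⟨p, hsub hp, hpe⟩
    · intro j₁ j₂ hne e he1 he2
      rcases Fin.eq_zero_or_eq_succ j₁ with rfl | ⟨i₁, rfl⟩ <;>
        rcases Fin.eq_zero_or_eq_succ j₂ with rfl | ⟨i₂, rfl⟩
      · exact hne rfl
      · rw [Fin.cons_zero] at he1
        rw [Fin.cons_succ] at he2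
        exact key i₂ e he1 he2
      · rw [Fin.cons_succ] at he1
        rw [Fin.cons_zero] at he2
        exact key i₁ e he2 he1
      · rw [Fin.cons_succ] at he1 he2
        have hii : i₁ ≠ i₂ := fun h => hne (congrArg Fin.succ h)
        exact hPdisj i₁ i₂ hii e he1 he2

end decomp

end MengerAux

section assembly

open MengerAux

/-- Edge version of Menger's theorem (hard direction), for finite `k`. -/
theorem menger_walks (H : SimpleGraph V) (u v : V) (k : ℕ)
    (hcut : ∀ C : Finset (Sym2 V), C.card < k → (H.deleteEdges ↑C).Reachable u v) :
    EdgeDisjointPaths H u v k := by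
  classical
  by_cases huv : u = v
  · subst huv
    exact ⟨fun _ => Walk.nil, fun _ => Walk.IsPath.nil, by simp⟩
  · obtain ⟨D, hD⟩ := exists_flow huv hcut k le_rfl
    obtain ⟨P0, _, hdisj⟩ := decomp huv k D hD
    refine ⟨fun j => (P0 j).bypass, fun j => Walk.bypass_isPath _, ?_⟩
    intro j₁ j₂ hne e he1 he2
    exact hdisj j₁ j₂ hne e (Walk.edges_bypass_subset _ he1)
      (Walk.edges_bypass_subset _ he2)

/-- Pigeonhole: one of `k` edge-disjoint walks avoids any edge set with fewer than `k` edges. -/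
theorem avoid_cut {G' : SimpleGraph V} {a b : V} {k : ℕ} (P : Fin k → G'.Walk a b)
    (hdisj : ∀ j₁ j₂ : Fin k, j₁ ≠ j₂ → ∀ e ∈ (P j₁).edges, e ∉ (P j₂).edges)
    (C : Finset (Sym2 V)) (hC : C.card < k) : ∃ j, ∀ e ∈ (P j).edges, e ∉ C := by
  by_contra h
  push_neg at h
  choose f hf1 hf2 using h
  have hinj : Function.Injective f := by
    intro j₁ j₂ he
    by_contra hne
    exact hdisj j₁ j₂ hne (f j₁) (hf1 j₁) (he ▸ hf1 j₂)
  have : k ≤ C.card := by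
    have := Finset.card_le_card_of_injOn f (s := Finset.univ) (fun j _ => hf2 j) (hinj.injOn)
    simpa using this
  omega

theorem reachable_of_adj_reachable {G' K : SimpleGraph V}
    (h : ∀ x y, G'.Adj x y → K.Reachable x y) {x y : V} (hr : G'.Reachable x y) :
    K.Reachable x y := by
  obtain ⟨W⟩ := hr
  induction W with
  | nil => exact Reachable.refl _
  | cons hadj _ ih => exact (h _ _ hadj).trans ih

end assembly

/-- The union of the forests of a maximal spanning forest decomposition of order `k`
is a `k`-certificate: two vertices are `k`-edge-connected in the union iff they are
`k`-edge-connected in `G`. -/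
theorem msfd_k_certificate (G : SimpleGraph V) (k : ℕ) (F : ℕ → SimpleGraph V)
    (hF : IsMSFDecomp G k F) (u v : V) :
    EdgeDisjointPaths (⨆ i ∈ Finset.range k, F i) u v k ↔ EdgeDisjointPaths G u v k := by
  classical
  set H : SimpleGraph V := ⨆ i ∈ Finset.range k, F i with hH
  have hHadj : ∀ a b, H.Adj a b ↔ ∃ i, i < k ∧ (F i).Adj a b := by
    intro a b
    rw [hH]
    simp [SimpleGraph.iSup_adj, Finset.mem_range]
  have hFle : ∀ i, i < k → F i ≤ H := by
    intro i hi a b hab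
    exact (hHadj a b).2 ⟨i, hi, hab⟩
  have hHG : H ≤ G := by
    intro a b hab
    obtain ⟨i, hik, h⟩ := (hHadj a b).1 hab
    exact ((hF i hik).1 h).1
  have hFdisj : ∀ i j, i < j → j < k → ∀ a b, (F i).Adj a b → ¬ (F j).Adj a b := by
    intro i j hij hjk a b hiadj hjadj
    have := ((hF j hjk).1 hjadj).2
    apply this
    simp only [SimpleGraph.iSup_adj]
    exact ⟨i, by simp [Finset.mem_range, hij], hiadj⟩
  -- bridging lemma: edges of `G` not cut by `C` connect in `H` minus `C`
  have hbridge : ∀ (C : Finset (Sym2 V)), C.card < k → ∀ x y, G.Adj x y →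
      s(x, y) ∉ (↑C : Set (Sym2 V)) → (H.deleteEdges ↑C).Reachable x y := by
    intro C hC x y hxy hxyC
    by_cases hHxy : H.Adj x y
    · exact SimpleGraph.Adj.reachable (by rw [SimpleGraph.deleteEdges_adj]; exact ⟨hHxy, hxyC⟩)
    · have hQ : ∀ i : Fin k, (F i).Reachable x y := by
        intro i
        have hGi : (G \ ⨆ j ∈ Finset.range (i : ℕ), F j).Adj x y := by
          rw [SimpleGraph.sdiff_adj]
          refine ⟨hxy, ?_⟩
          intro hsup
          simp only [SimpleGraph.iSup_adj, Finset.mem_range] at hsup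
          obtain ⟨j, hji, hj⟩ := hsup
          exact hHxy ((hHadj x y).2 ⟨j, lt_trans hji i.2, hj⟩)
        exact (hF i i.2).2.2 x y hGi.reachable
      have Qw : ∀ i : Fin k, (F (i : ℕ)).Walk x y := fun i => (hQ i).some
      have QHs : ∀ i : Fin k,
          {W : H.Walk x y // ∀ e ∈ W.edges, e ∈ (F (i : ℕ)).edgeSet} := by
        intro i
        refine ⟨(Qw i).transfer H
          (fun e he => SimpleGraph.edgeSet_mono (hFle i i.2)
            (Walk.edges_subset_edgeSet _ he)), ?_⟩
        intro e he
        rw [Walk.edges_transfer] at he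
        exact Walk.edges_subset_edgeSet _ he
      have hQdisj : ∀ j₁ j₂ : Fin k, j₁ ≠ j₂ →
          ∀ e ∈ (QHs j₁).1.edges, e ∉ (QHs j₂).1.edges := by
        intro j₁ j₂ hne e he1 he2
        have h1 := (QHs j₁).2 e he1
        have h2 := (QHs j₂).2 e he2
        induction e with
        | h a b =>
          rw [SimpleGraph.mem_edgeSet] at h1 h2
          rcases lt_or_gt_of_ne (fun h : (j₁ : ℕ) = (j₂ : ℕ) => hne (Fin.ext h)) with hlt | hgt
          · exact hFdisj _ _ hlt j₂.2 a b h1 h2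
          · exact hFdisj _ _ hgt j₁.2 a b h2 h1
      obtain ⟨i, hi⟩ := avoid_cut (fun i => (QHs i).1) hQdisj C hC
      refine ⟨(QHs i).1.transfer (H.deleteEdges ↑C) ?_⟩
      intro e he
      rw [SimpleGraph.edgeSet_deleteEdges]
      exact ⟨Walk.edges_subset_edgeSet _ he, hi e he⟩
  constructor
  · rintro ⟨P, hp, hd⟩
    refine ⟨fun j => (P j).transfer G
      (fun e he => SimpleGraph.edgeSet_mono hHG (Walk.edges_subset_edgeSet _ he)), ?_, ?_⟩
    · exact fun j => (hp j).transfer _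
    · intro j₁ j₂ hne e he1 he2
      rw [Walk.edges_transfer] at he1 he2
      exact hd j₁ j₂ hne e he1 he2
  · rintro ⟨P, hp, hd⟩
    apply menger_walks
    intro C hC
    obtain ⟨j, hj⟩ := avoid_cut P hd C hC
    have hrG : (G.deleteEdges ↑C).Reachable u v := by
      refine ⟨(P j).transfer (G.deleteEdges ↑C) ?_⟩
      intro e he
      rw [SimpleGraph.edgeSet_deleteEdges]
      exact ⟨Walk.edges_subset_edgeSet _ he, hj e he⟩
    refine reachable_of_adj_reachable ?_ hrG
    intro x y hxy
    rw [SimpleGraph.deleteEdges_adj] at hxy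
    exact hbridge C hC x y hxy.1 hxy.2
end

section
/- For any finite undirected graph G on n vertices, Σ_{e ∈ E(G)} 1/s_e ≤ n - 1, where s_e denotes the strong connectivity of edge e (the maximum k such that e lies in a k-edge-connected subgraph of G). -/
open SimpleGraph

variable {V : Type*}

/-- A subgraph `H` of `G` is `k`-edge-connected: it has at least two vertices, and every
cut of `H` (partition of its vertex set into two nonempty parts) has at least `k`
crossing edges. -/
def KEdgeConnSub (G : SimpleGraph V) (H : G.Subgraph) (k : ℕ) : Prop :=
  2 ≤ H.verts.ncard ∧
    ∀ A : Set V, A ⊆ H.verts → A.Nonempty → (H.verts \ A).Nonempty →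
      k ≤ {e ∈ H.edgeSet | ∃ a ∈ A, ∃ b ∈ H.verts \ A, e = s(a, b)}.ncard

/-- The strength `s_e` of an edge `e` of `G`: the maximum `k` such that `e` lies in a
`k`-edge-connected subgraph of `G`. -/
noncomputable def strength (G : SimpleGraph V) (e : Sym2 V) : ℕ :=
  sSup {k : ℕ | ∃ H : G.Subgraph, KEdgeConnSub G H k ∧ e ∈ H.edgeSet}

namespace StrengthProof

variable {G : SimpleGraph V}

/-- crossing edge set of a cut -/
def cross (H : G.Subgraph) (A : Set V) : Set (Sym2 V) :=
  {e ∈ H.edgeSet | ∃ a ∈ A, ∃ b ∈ H.verts \ A, e = s(a, b)}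

lemma kec_iff {H : G.Subgraph} {k : ℕ} :
    KEdgeConnSub G H k ↔ 2 ≤ H.verts.ncard ∧
      ∀ A : Set V, A ⊆ H.verts → A.Nonempty → (H.verts \ A).Nonempty →
        k ≤ (cross H A).ncard := Iff.rfl

lemma kec_mono {H : G.Subgraph} {k m : ℕ} (h : KEdgeConnSub G H k) (hm : m ≤ k) :
    KEdgeConnSub G H m :=
  ⟨h.1, fun A h1 h2 h3 => le_trans hm (h.2 A h1 h2 h3)⟩

lemma cross_mono {H H' : G.Subgraph} (hle : H ≤ H') {A A' : Set V} (hA : A ⊆ A')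
    (h2 : H.verts \ A ⊆ H'.verts \ A') : cross H A ⊆ cross H' A' := by
  rintro e ⟨he, a, ha, b, hb, rfl⟩
  exact ⟨H.edgeSet_mono hle he, a, hA ha, b, h2 hb, rfl⟩

variable [Fintype V]

lemma kec_of_verts_eq {H H' : G.Subgraph} {k : ℕ} (h : KEdgeConnSub G H k)
    (hle : H ≤ H') (hv : H'.verts = H.verts) : KEdgeConnSub G H' k := by
  refine ⟨hv ▸ h.1, fun A h1 h2 h3 => ?_⟩
  rw [hv] at h1 h3
  refine le_trans (h.2 A h1 h2 h3) (Set.ncard_le_ncard ?_ (Set.toFinite _))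
  exact cross_mono hle le_rfl (by rw [hv])

lemma kec_sup {H₁ H₂ : G.Subgraph} {k : ℕ} (h1 : KEdgeConnSub G H₁ k)
    (h2 : KEdgeConnSub G H₂ k) (hn : (H₁.verts ∩ H₂.verts).Nonempty) :
    KEdgeConnSub G (H₁ ⊔ H₂) k := by
  obtain ⟨v, hv1, hv2⟩ := hn
  constructor
  · exact le_trans h1.1 (Set.ncard_le_ncard le_sup_left (Set.toFinite _))
  intro A hA hAne hcne
  have hsub : ∀ (H : G.Subgraph), H ≤ H₁ ⊔ H₂ → KEdgeConnSub G H k →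
      (A ∩ H.verts).Nonempty → (H.verts \ A).Nonempty → k ≤ (cross (H₁ ⊔ H₂) A).ncard := by
    intro H hle hk hne1 hne2
    refine le_trans (hk.2 (A ∩ H.verts) Set.inter_subset_right hne1 ?_)
      (Set.ncard_le_ncard (cross_mono hle Set.inter_subset_left ?_) (Set.toFinite _))
    · obtain ⟨b, hb⟩ := hne2
      exact ⟨b, hb.1, fun h => hb.2 h.1⟩
    · rintro x ⟨hx1, hx2⟩
      exact ⟨Set.mem_of_mem_of_subset hx1 (by exact fun y hy => Subgraph.verts_mono hle hy), fun h => hx2 ⟨h, hx1⟩⟩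
  by_cases c1 : (A ∩ H₁.verts).Nonempty ∧ (H₁.verts \ A).Nonempty
  · exact hsub H₁ le_sup_left h1 c1.1 c1.2
  by_cases c2 : (A ∩ H₂.verts).Nonempty ∧ (H₂.verts \ A).Nonempty
  · exact hsub H₂ le_sup_right h2 c2.1 c2.2
  -- neither split: contradiction
  exfalso
  rw [not_and_or] at c1 c2
  have hv1' : H₁.verts ⊆ A ∨ H₁.verts ∩ A = ∅ := by
    rcases c1 with h | h
    · right; rw [Set.not_nonempty_iff_eq_empty] at h; rw [Set.inter_comm]; exact h
    · left; rw [Set.not_nonempty_iff_eq_empty, Set.diff_eq_empty] at h; exact h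
  have hv2' : H₂.verts ⊆ A ∨ H₂.verts ∩ A = ∅ := by
    rcases c2 with h | h
    · right; rw [Set.not_nonempty_iff_eq_empty] at h; rw [Set.inter_comm]; exact h
    · left; rw [Set.not_nonempty_iff_eq_empty, Set.diff_eq_empty] at h; exact h
  rcases hv1' with hh1 | hh1 <;> rcases hv2' with hh2 | hh2
  · obtain ⟨b, hb⟩ := hcne
    rcases hb.1 with h | h
    · exact hb.2 (hh1 h)
    · exact hb.2 (hh2 h)
  · obtain ⟨a, ha⟩ := hAne
    have hva : v ∈ A := hh1 hv1
    exact (Set.eq_empty_iff_forall_notMem.mp hh2 v) ⟨hv2, hva⟩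
  · have hva : v ∈ A := hh2 hv2
    exact (Set.eq_empty_iff_forall_notMem.mp hh1 v) ⟨hv1, hva⟩
  · obtain ⟨a, ha⟩ := hAne
    rcases hA ha with h | h
    · exact (Set.eq_empty_iff_forall_notMem.mp hh1 a) ⟨h, ha⟩
    · exact (Set.eq_empty_iff_forall_notMem.mp hh2 a) ⟨h, ha⟩

variable {G : SimpleGraph V}

def Rel (G : SimpleGraph V) (k : ℕ) (u v : V) : Prop :=
  ∃ H : G.Subgraph, KEdgeConnSub G H k ∧ u ∈ H.verts ∧ v ∈ H.verts

def cls (G : SimpleGraph V) (k : ℕ) (v : V) : Set V := {u | u = v ∨ Rel G k u v}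

lemma Rel.symm' {k : ℕ} {u v : V} (h : Rel G k u v) : Rel G k v u := by
  obtain ⟨H, h1, h2, h3⟩ := h; exact ⟨H, h1, h3, h2⟩

lemma rel_mono {k m : ℕ} {u v : V} (h : Rel G k u v) (hm : m ≤ k) : Rel G m u v := by
  obtain ⟨H, h1, h2, h3⟩ := h; exact ⟨H, kec_mono h1 hm, h2, h3⟩

lemma mem_cls_self (k : ℕ) (v : V) : v ∈ cls G k v := Or.inl rfl

variable [Fintype V]

lemma Rel.trans' {k : ℕ} {u v w : V} (h1 : Rel G k u v) (h2 : Rel G k v w) : Rel G k u w := by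
  obtain ⟨H1, hk1, hu, hv1⟩ := h1
  obtain ⟨H2, hk2, hv2, hw⟩ := h2
  exact ⟨H1 ⊔ H2, kec_sup hk1 hk2 ⟨v, hv1, hv2⟩, Or.inl hu, Or.inr hw⟩

lemma rel_of_mem_cls {k : ℕ} {v a b : V} (ha : a ∈ cls G k v) (hb : b ∈ cls G k v)
    (hab : a ≠ b) : Rel G k a b := by
  rcases ha with rfl | ha <;> rcases hb with rfl | hb
  · exact absurd rfl hab
  · exact hb.symm'
  · exact ha
  · exact ha.trans' hb.symm'

lemma cls_eq_of_mem {k : ℕ} {u v : V} (h : u ∈ cls G k v) : cls G k u = cls G k v := by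
  ext x
  rcases h with rfl | h
  · rfl
  constructor
  · rintro (rfl | hx)
    · exact Or.inr h
    · exact Or.inr (hx.trans' h)
  · rintro (rfl | hx)
    · exact Or.inr h.symm'
    · exact Or.inr (hx.trans' h.symm')

/-- the strength defining set -/
lemma strength_le_of_kec_aux {H : G.Subgraph} {k : ℕ} (h : KEdgeConnSub G H k) :
    k ≤ G.edgeSet.ncard := by
  obtain ⟨h2, hcut⟩ := h
  obtain ⟨a, b, ha, hb, hab⟩ := (Set.one_lt_ncard_iff (Set.toFinite _)).mp h2
  have h3 : (H.verts \ {a}).Nonempty := ⟨b, hb, by simpa using (Ne.symm hab)⟩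
  refine le_trans (hcut {a} (Set.singleton_subset_iff.mpr ha) ⟨a, rfl⟩ h3) ?_
  refine Set.ncard_le_ncard ?_ (Set.toFinite _)
  rintro e ⟨he, -⟩
  exact H.edgeSet_subset he

lemma bddAbove_strengthSet (e : Sym2 V) :
    BddAbove {k : ℕ | ∃ H : G.Subgraph, KEdgeConnSub G H k ∧ e ∈ H.edgeSet} := by
  refine ⟨G.edgeSet.ncard, fun k hk => ?_⟩
  obtain ⟨H, h1, -⟩ := hk
  exact strength_le_of_kec_aux h1

lemma le_strength_of_kec {H : G.Subgraph} {k : ℕ} {e : Sym2 V} (h : KEdgeConnSub G H k)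
    (he : e ∈ H.edgeSet) : k ≤ strength G e :=
  le_csSup (bddAbove_strengthSet e) ⟨H, h, he⟩

lemma one_le_strength {e : Sym2 V} (he : e ∈ G.edgeSet) : 1 ≤ strength G e := by
  induction e using Sym2.ind with
  | _ a b =>
    rw [SimpleGraph.mem_edgeSet] at he
    refine le_strength_of_kec (H := G.subgraphOfAdj he) ?_ (by simp [edgeSet_subgraphOfAdj])
    constructor
    · simp only [subgraphOfAdj_verts]
      rw [Set.ncard_pair he.ne]
    intro A hA hAne hcne
    have hmem : s(a, b) ∈ cross (G.subgraphOfAdj he) A := by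
      obtain ⟨x, hx⟩ := hAne
      obtain ⟨y, hy⟩ := hcne
      have hxA := hA hx
      simp only [subgraphOfAdj_verts, Set.mem_insert_iff, Set.mem_singleton_iff] at hxA
      refine ⟨by simp [edgeSet_subgraphOfAdj], ?_⟩
      rcases hxA with rfl | rfl
      · refine ⟨x, hx, b, ⟨by simp, fun hbA => ?_⟩, rfl⟩
        -- b ∈ A would make complement empty
        have : y = x ∨ y = b := by simpa [subgraphOfAdj_verts] using hy.1
        rcases this with rfl | rfl
        · exact hy.2 hx
        · exact hy.2 hbA
      · refine ⟨x, hx, a, ⟨by simp, fun haA => ?_⟩, Sym2.eq_swap⟩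
        have : y = a ∨ y = x := by simpa [subgraphOfAdj_verts] using hy.1
        rcases this with rfl | rfl
        · exact hy.2 haA
        · exact hy.2 hx
    exact (Set.ncard_pos (Set.toFinite _)).mpr ⟨_, hmem⟩

lemma strength_mem {e : Sym2 V} (he : e ∈ G.edgeSet) :
    ∃ H : G.Subgraph, KEdgeConnSub G H (strength G e) ∧ e ∈ H.edgeSet := by
  have hne : {k : ℕ | ∃ H : G.Subgraph, KEdgeConnSub G H k ∧ e ∈ H.edgeSet}.Nonempty := by
    have := one_le_strength (G := G) he
    by_contra h
    rw [Set.not_nonempty_iff_eq_empty] at h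
    simp [strength, h] at this
  exact Nat.sSup_mem hne (bddAbove_strengthSet e)

lemma rel_of_le_strength {a b : V} {m : ℕ} (he : s(a, b) ∈ G.edgeSet)
    (hm : m ≤ strength G s(a, b)) : Rel G m a b := by
  obtain ⟨H, h1, h2⟩ := strength_mem he
  rw [Subgraph.mem_edgeSet] at h2
  exact ⟨H, kec_mono h1 hm, H.edge_vert h2, H.edge_vert h2.symm⟩

lemma strength_ge_of_rel {a b : V} {k : ℕ} (hab : G.Adj a b) (h : Rel G k a b) :
    k ≤ strength G s(a, b) := by
  obtain ⟨H, h1, h2, h3⟩ := h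
  refine le_strength_of_kec (H := H ⊔ G.subgraphOfAdj hab) ?_ ?_
  · refine kec_of_verts_eq h1 le_sup_left ?_
    rw [Subgraph.verts_sup, subgraphOfAdj_verts]
    rw [Set.union_eq_self_of_subset_right]
    rintro x (rfl | rfl)
    exacts [h2, h3]
  · rw [Subgraph.edgeSet_sup]
    right
    simp [edgeSet_subgraphOfAdj]

variable {G : SimpleGraph V} [Fintype V]

lemma cross_le_of_le {H H' : G.Subgraph} {k : ℕ} (hle : H ≤ H') (hk : KEdgeConnSub G H k)
    {A : Set V} (h1 : (A ∩ H.verts).Nonempty) (h2 : (H.verts \ A).Nonempty) :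
    k ≤ (cross H' A).ncard := by
  refine le_trans (hk.2 (A ∩ H.verts) Set.inter_subset_right h1 ?_)
    (Set.ncard_le_ncard (cross_mono hle Set.inter_subset_left ?_) (Set.toFinite _))
  · obtain ⟨b, hb⟩ := h2
    exact ⟨b, hb.1, fun h => hb.2 h.1⟩
  · rintro x ⟨hx1, hx2⟩
    exact ⟨Subgraph.verts_mono hle hx1, fun h => hx2 ⟨h, hx1⟩⟩

lemma cls_good {k : ℕ} {u : V} (h : ∃ H : G.Subgraph, KEdgeConnSub G H k ∧ u ∈ H.verts) :
    ∃ H : G.Subgraph, KEdgeConnSub G H k ∧ H.verts = cls G k u := by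
  classical
  set F : Set G.Subgraph := {H | KEdgeConnSub G H k ∧ u ∈ H.verts} with hF
  obtain ⟨H₀, h₀⟩ := h
  have hverts : (sSup F).verts = cls G k u := by
    rw [Subgraph.verts_sSup]
    ext x
    simp only [Set.mem_iUnion]
    constructor
    · rintro ⟨H, hHF, hx⟩
      exact Or.inr ⟨H, hHF.1, hx, hHF.2⟩
    · rintro (rfl | ⟨H, h1, h2, h3⟩)
      · exact ⟨H₀, h₀, h₀.2⟩
      · exact ⟨H, ⟨h1, h3⟩, h2⟩
  refine ⟨sSup F, ⟨?_, ?_⟩, hverts⟩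
  · refine le_trans h₀.1.1 (Set.ncard_le_ncard ?_ (Set.toFinite _))
    exact Subgraph.verts_mono (le_sSup h₀)
  · intro A hA hAne hcne
    obtain ⟨a, ha⟩ := hAne
    obtain ⟨b, hb⟩ := hcne
    have hav : a ∈ (sSup F).verts := hA ha
    rw [Subgraph.verts_sSup] at hav
    simp only [Set.mem_iUnion] at hav
    obtain ⟨Ha, hHaF, haa⟩ := hav
    have hbv := hb.1
    rw [Subgraph.verts_sSup] at hbv
    simp only [Set.mem_iUnion] at hbv
    obtain ⟨Hb, hHbF, hbb⟩ := hbv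
    have hK : KEdgeConnSub G (Ha ⊔ Hb) k := kec_sup hHaF.1 hHbF.1 ⟨u, hHaF.2, hHbF.2⟩
    refine cross_le_of_le (sup_le (le_sSup hHaF) (le_sSup hHbF)) hK ⟨a, ha, Or.inl haa⟩
      ⟨b, Or.inr hbb, hb.2⟩

variable [Fintype V] (G : SimpleGraph V)

noncomputable def edgesIn (S : Set V) : Finset (Sym2 V) :=
  (Set.toFinite {e | e ∈ G.edgeSet ∧ ∀ x ∈ e, x ∈ S}).toFinset

noncomputable def between (𝒜 ℬ : Finset (Set V)) : Finset (Sym2 V) :=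
  (Set.toFinite {e | e ∈ G.edgeSet ∧
    ∃ a b, e = s(a, b) ∧ (∃ S ∈ 𝒜, a ∈ S) ∧ (∃ T ∈ ℬ, b ∈ T)}).toFinset

noncomputable def crossE (𝒞 : Finset (Set V)) : Finset (Sym2 V) :=
  (Set.toFinite {e | e ∈ G.edgeSet ∧
    ∃ a b, e = s(a, b) ∧ ∃ S ∈ 𝒞, ∃ T ∈ 𝒞, S ≠ T ∧ a ∈ S ∧ b ∈ T}).toFinset

variable {G}

lemma mem_edgesIn {S : Set V} {e : Sym2 V} :
    e ∈ edgesIn G S ↔ e ∈ G.edgeSet ∧ ∀ x ∈ e, x ∈ S := by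
  simp [edgesIn]

lemma mem_between {𝒜 ℬ : Finset (Set V)} {e : Sym2 V} :
    e ∈ between G 𝒜 ℬ ↔ e ∈ G.edgeSet ∧
      ∃ a b, e = s(a, b) ∧ (∃ S ∈ 𝒜, a ∈ S) ∧ (∃ T ∈ ℬ, b ∈ T) := by
  simp [between]

lemma mem_crossE {𝒞 : Finset (Set V)} {e : Sym2 V} :
    e ∈ crossE G 𝒞 ↔ e ∈ G.edgeSet ∧
      ∃ a b, e = s(a, b) ∧ ∃ S ∈ 𝒞, ∃ T ∈ 𝒞, S ≠ T ∧ a ∈ S ∧ b ∈ T := by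
  simp [crossE]

lemma mader : ∀ (n : ℕ) (k : ℕ) (𝒞 : Finset (Set V)), 𝒞.card ≤ n →
    (∀ S ∈ 𝒞, S.Nonempty) →
    (∀ S ∈ 𝒞, ∀ T ∈ 𝒞, S ≠ T → Disjoint S T) →
    (∀ S ∈ 𝒞, S.ncard = 1 ∨ ∃ H : G.Subgraph, KEdgeConnSub G H (k + 1) ∧ H.verts = S) →
    (∀ H : G.Subgraph, KEdgeConnSub G H (k + 1) → ∀ S ∈ 𝒞, ∀ T ∈ 𝒞,
      (H.verts ∩ S).Nonempty → (H.verts ∩ T).Nonempty → S = T) →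
    (crossE G 𝒞).card ≤ k * (𝒞.card - 1) := by
  intro n
  induction n with
  | zero =>
    intro k 𝒞 hcard _ _ _ _
    rw [Nat.le_zero, Finset.card_eq_zero] at hcard
    subst hcard
    simp [crossE]
  | succ n ih =>
    intro k 𝒞 hcard hne hdisj hgood hsep
    classical
    by_cases hq1 : 𝒞.card ≤ 1
    · -- no crossing edges possible
      have : crossE G 𝒞 = ∅ := by
        ext e
        simp only [Finset.notMem_empty, iff_false, mem_crossE]
        rintro ⟨-, a, b, -, S, hS, T, hT, hST, -⟩
        exact hST (Finset.card_le_one.mp hq1 S hS T hT)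
      simp [this]
    push_neg at hq1
    by_cases hcut : ∃ 𝒜 : Finset (Set V), 𝒜 ⊆ 𝒞 ∧ 𝒜.Nonempty ∧ (𝒞 \ 𝒜).Nonempty ∧
        (between G 𝒜 (𝒞 \ 𝒜)).card ≤ k
    · obtain ⟨𝒜, hsub, hAne, hBne, hk⟩ := hcut
      set ℬ := 𝒞 \ 𝒜 with hB
      have hsubB : ℬ ⊆ 𝒞 := Finset.sdiff_subset
      have hAcard : 𝒜.card ≤ 𝒞.card := Finset.card_le_card hsub
      have hcards : 𝒜.card + ℬ.card = 𝒞.card := by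
        rw [hB, Finset.card_sdiff_of_subset hsub]
        omega
      have hAlt : 𝒜.card < 𝒞.card := by
        rcases hBne with ⟨T, hT⟩
        have : 0 < ℬ.card := Finset.card_pos.mpr ⟨T, hT⟩
        omega
      have hBlt : ℬ.card < 𝒞.card := by
        rcases hAne with ⟨S, hS⟩
        have : 0 < 𝒜.card := Finset.card_pos.mpr ⟨S, hS⟩
        omega
      -- split the crossing edges
      have hsplit : crossE G 𝒞 ⊆ crossE G 𝒜 ∪ crossE G ℬ ∪ between G 𝒜 ℬ := by
        intro e he
        rw [mem_crossE] at he
        obtain ⟨heE, a, b, rfl, S, hS, T, hT, hST, haS, hbT⟩ := he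
        simp only [Finset.mem_union]
        by_cases hSA : S ∈ 𝒜 <;> by_cases hTA : T ∈ 𝒜
        · exact Or.inl (Or.inl (mem_crossE.mpr ⟨heE, a, b, rfl, S, hSA, T, hTA, hST, haS, hbT⟩))
        · exact Or.inr (mem_between.mpr ⟨heE, a, b, rfl, ⟨S, hSA, haS⟩,
            ⟨T, Finset.mem_sdiff.mpr ⟨hT, hTA⟩, hbT⟩⟩)
        · refine Or.inr (mem_between.mpr ⟨heE, b, a, Sym2.eq_swap, ⟨T, hTA, hbT⟩,
            ⟨S, Finset.mem_sdiff.mpr ⟨hS, hSA⟩, haS⟩⟩)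
        · exact Or.inl (Or.inr (mem_crossE.mpr ⟨heE, a, b, rfl, S,
            Finset.mem_sdiff.mpr ⟨hS, hSA⟩, T, Finset.mem_sdiff.mpr ⟨hT, hTA⟩, hST, haS, hbT⟩))
      have hA := ih k 𝒜 (by omega) (fun S hS => hne S (hsub hS))
        (fun S hS T hT => hdisj S (hsub hS) T (hsub hT))
        (fun S hS => hgood S (hsub hS))
        (fun H hH S hS T hT => hsep H hH S (hsub hS) T (hsub hT))
      have hBB := ih k ℬ (by omega) (fun S hS => hne S (hsubB hS))
        (fun S hS T hT => hdisj S (hsubB hS) T (hsubB hT))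
        (fun S hS => hgood S (hsubB hS))
        (fun H hH S hS T hT => hsep H hH S (hsubB hS) T (hsubB hT))
      have h1 : (crossE G 𝒞).card ≤ (crossE G 𝒜).card + (crossE G ℬ).card +
          (between G 𝒜 ℬ).card :=
        le_trans (Finset.card_le_card hsplit)
          (le_trans (Finset.card_union_le _ _)
            (by gcongr; exact Finset.card_union_le _ _))
      obtain ⟨a', ha'⟩ : ∃ a', 𝒜.card = a' + 1 :=
        ⟨𝒜.card - 1, by have := Finset.card_pos.mpr hAne; omega⟩
      obtain ⟨b', hb'⟩ : ∃ b', ℬ.card = b' + 1 :=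
        ⟨ℬ.card - 1, by have := Finset.card_pos.mpr hBne; omega⟩
      have hCc : 𝒞.card = a' + b' + 2 := by omega
      calc (crossE G 𝒞).card ≤ k * (𝒜.card - 1) + k * (ℬ.card - 1) + k := by
            refine le_trans h1 ?_; gcongr
        _ ≤ k * (𝒞.card - 1) := by
            rw [ha', hb', hCc]
            simp only [Nat.add_sub_cancel]
            rw [show a' + b' + 2 - 1 = a' + b' + 1 by omega]
            exact le_of_eq (by ring)
    · -- no small cut: build a (k+1)-edge-connected subgraph spanning ≥ 2 classes
      exfalso
      push_neg at hcut
      set U : Set V := ⋃₀ (↑𝒞 : Set (Set V)) with hU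
      set H : G.Subgraph := (⊤ : G.Subgraph).induce U with hHdef
      have hHverts : H.verts = U := rfl
      have hHkec : KEdgeConnSub G H (k + 1) := by
        constructor
        · obtain ⟨S, hS, T, hT, hST⟩ := Finset.one_lt_card.mp hq1
          obtain ⟨s, hs⟩ := hne S hS
          obtain ⟨t, ht⟩ := hne T hT
          have hst : s ≠ t := fun h => (hdisj S hS T hT hST).ne_of_mem hs (h ▸ ht) rfl
          refine (Set.one_lt_ncard_iff (Set.toFinite _)).mpr ⟨s, t, ?_, ?_, hst⟩
          · exact ⟨S, hS, hs⟩
          · exact ⟨T, hT, ht⟩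
        intro A hA hAne hcne
        by_cases hsplitcls : ∃ S ∈ 𝒞, (S ∩ A).Nonempty ∧ (S \ A).Nonempty
        · obtain ⟨S, hS, ⟨s, hs⟩, ⟨t, ht⟩⟩ := hsplitcls
          have hngood : ¬ S.ncard = 1 := by
            intro h1
            obtain ⟨x, hx⟩ := Set.ncard_eq_one.mp h1
            rw [hx] at hs ht
            rw [hs.1] at hs
            rw [ht.1] at ht
            exact ht.2 (hs.1 ▸ hs.2)
          obtain ⟨HS, hHS, hHSverts⟩ := (hgood S hS).resolve_left hngood
          have hle : HS ≤ H := by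
            constructor
            · rw [hHSverts, hHverts]
              exact fun x hx => ⟨S, hS, hx⟩
            · intro x y hxy
              refine ⟨?_, ?_, HS.adj_sub hxy⟩
              · exact (fun hx => ⟨S, hS, hx⟩) (hHSverts ▸ HS.edge_vert hxy)
              · exact (fun hy => ⟨S, hS, hy⟩) (hHSverts ▸ HS.edge_vert hxy.symm)
          refine cross_le_of_le hle hHS ⟨s, hs.2, ?_⟩ ⟨t, ?_, ht.2⟩
          · rw [hHSverts]; exact hs.1
          · rw [hHSverts]; exact ht.1
        · push_neg at hsplitcls
          have hdichot : ∀ S ∈ 𝒞, S ⊆ A ∨ S ∩ A = ∅ := by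
            intro S hS
            by_cases h : (S ∩ A).Nonempty
            · left
              have := hsplitcls S hS h
              rw [Set.diff_eq_empty] at this
              exact this
            · right
              exact Set.not_nonempty_iff_eq_empty.mp h
          set 𝒜 : Finset (Set V) := 𝒞.filter (fun S => S ⊆ A) with h𝒜
          have hAsub : 𝒜 ⊆ 𝒞 := Finset.filter_subset _ _
          have hAne' : 𝒜.Nonempty := by
            obtain ⟨a, ha⟩ := hAne
            obtain ⟨S, hS, haS⟩ : ∃ S ∈ 𝒞, a ∈ S := by
              have : a ∈ U := hA ha
              simpa [hU] using this
            refine ⟨S, Finset.mem_filter.mpr ⟨hS, ?_⟩⟩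
            rcases hdichot S hS with h | h
            · exact h
            · exact (Set.eq_empty_iff_forall_notMem.mp h a ⟨haS, ha⟩).elim
          have hBne' : (𝒞 \ 𝒜).Nonempty := by
            obtain ⟨b, hb⟩ := hcne
            obtain ⟨T, hT, hbT⟩ : ∃ T ∈ 𝒞, b ∈ T := by
              have : b ∈ U := hb.1
              simpa [hU] using this
            refine ⟨T, Finset.mem_sdiff.mpr ⟨hT, fun hmem => ?_⟩⟩
            exact hb.2 ((Finset.mem_filter.mp hmem).2 hbT)
          have hbetw := hcut 𝒜 hAsub hAne' hBne'
          have hss : ((between G 𝒜 (𝒞 \ 𝒜) : Finset (Sym2 V)) : Set (Sym2 V)) ⊆ cross H A := by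
            intro e he
            rw [Finset.mem_coe, mem_between] at he
            obtain ⟨heE, x, y, rfl, ⟨S, hS, hxS⟩, ⟨T, hT, hyT⟩⟩ := he
            have hSsubA : S ⊆ A := (Finset.mem_filter.mp hS).2
            have hTmem := Finset.mem_sdiff.mp hT
            have hTA : T ∩ A = ∅ := by
              rcases hdichot T hTmem.1 with h | h
              · refine absurd ?_ hTmem.2
                rw [h𝒜, Finset.mem_filter]
                exact ⟨hTmem.1, h⟩
              · exact h
            have hxU : x ∈ U := ⟨S, hAsub hS, hxS⟩
            have hyU : y ∈ U := ⟨T, hTmem.1, hyT⟩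
            have hyA : y ∉ A := fun h => Set.eq_empty_iff_forall_notMem.mp hTA y ⟨hyT, h⟩
            refine ⟨?_, x, hSsubA hxS, y, ⟨hyU, hyA⟩, rfl⟩
            rw [Subgraph.mem_edgeSet]
            exact ⟨hxU, hyU, (SimpleGraph.mem_edgeSet G).mp heE⟩
          have : k + 1 ≤ (cross H A).ncard := by
            refine le_trans ?_ (Set.ncard_le_ncard hss (Set.toFinite _))
            rw [Set.ncard_coe_finset]
            omega
          exact this
      -- H meets two distinct classes
      obtain ⟨S, hS, T, hT, hST⟩ := Finset.one_lt_card.mp hq1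
      obtain ⟨s, hs⟩ := hne S hS
      obtain ⟨t, ht⟩ := hne T hT
      exact hST (hsep H hHkec S hS T hT ⟨s, ⟨S, hS, hs⟩, hs⟩ ⟨t, ⟨T, hT, ht⟩, ht⟩)

variable [Fintype V] {G : SimpleGraph V}

lemma cls_eq_singleton_of_big {k : ℕ} {v : V} (hk : G.edgeSet.ncard + 1 ≤ k) :
    cls G k v = {v} := by
  ext x
  simp only [Set.mem_singleton_iff, cls, Set.mem_setOf_eq]
  constructor
  · rintro (rfl | ⟨H, hH, -, -⟩)
    · rfl
    · exact absurd (strength_le_of_kec_aux hH) (by omega)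
  · rintro rfl; exact Or.inl rfl

lemma edgesIn_singleton (v : V) : edgesIn G {v} = ∅ := by
  ext e
  induction e using Sym2.ind with
  | _ a b =>
    simp only [Finset.notMem_empty, iff_false, mem_edgesIn]
    rintro ⟨he, hall⟩
    have ha : a = v := hall a (Sym2.mem_mk_left a b)
    have hb : b = v := hall b (Sym2.mem_mk_right a b)
    exact (G.ne_of_adj ((SimpleGraph.mem_edgeSet G).mp he)) (ha.trans hb.symm)

lemma cls_subset {k : ℕ} {v u : V} (hu : u ∈ cls G k v) :
    cls G (k + 1) u ⊆ cls G k v := by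
  rintro x (rfl | hx)
  · exact hu
  · have hxk : Rel G k x u := rel_mono hx (Nat.le_succ k)
    rcases hu with rfl | hu
    · exact Or.inr hxk
    · exact Or.inr (hxk.trans' hu)

lemma main_lemma : ∀ (j k : ℕ) (v : V), G.edgeSet.ncard + 1 ≤ k + j →
    ∑ e ∈ edgesIn G (cls G k v), (1 / (strength G e : ℝ)) ≤ ((cls G k v).ncard : ℝ) - 1 := by
  intro j
  induction j with
  | zero =>
    intro k v hk
    rw [cls_eq_singleton_of_big (by omega), edgesIn_singleton]
    simp
  | succ j ih =>
    intro k v hk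
    classical
    by_cases hbig : G.edgeSet.ncard + 1 ≤ k
    · rw [cls_eq_singleton_of_big hbig, edgesIn_singleton]
      simp
    set S : Set V := cls G k v with hS
    set 𝒞 : Finset (Set V) := (Set.toFinite S).toFinset.image (fun u => cls G (k + 1) u)
      with h𝒞
    have hmem𝒞 : ∀ T ∈ 𝒞, ∃ u ∈ S, T = cls G (k + 1) u := by
      intro T hT
      rw [h𝒞, Finset.mem_image] at hT
      obtain ⟨u, hu, rfl⟩ := hT
      exact ⟨u, (Set.Finite.mem_toFinset _).mp hu, rfl⟩
    have hTsubS : ∀ T ∈ 𝒞, T ⊆ S := by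
      intro T hT
      obtain ⟨u, hu, rfl⟩ := hmem𝒞 T hT
      exact cls_subset hu
    have hdisj : ∀ T₁ ∈ 𝒞, ∀ T₂ ∈ 𝒞, T₁ ≠ T₂ → Disjoint T₁ T₂ := by
      intro T₁ h₁ T₂ h₂ hne12
      obtain ⟨u₁, -, rfl⟩ := hmem𝒞 T₁ h₁
      obtain ⟨u₂, -, rfl⟩ := hmem𝒞 T₂ h₂
      rw [Set.disjoint_left]
      intro x hx1 hx2
      exact hne12 ((cls_eq_of_mem hx1).symm.trans (cls_eq_of_mem hx2))
    have hclsS : ∀ u ∈ S, cls G (k + 1) u ∈ 𝒞 := by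
      intro u hu
      rw [h𝒞, Finset.mem_image]
      exact ⟨u, (Set.Finite.mem_toFinset _).mpr hu, rfl⟩
    have hgood : ∀ T ∈ 𝒞, T.ncard = 1 ∨
        ∃ H : G.Subgraph, KEdgeConnSub G H (k + 1) ∧ H.verts = T := by
      intro T hT
      obtain ⟨u, -, rfl⟩ := hmem𝒞 T hT
      by_cases hex : ∃ H : G.Subgraph, KEdgeConnSub G H (k + 1) ∧ u ∈ H.verts
      · exact Or.inr (cls_good hex)
      · left
        have : cls G (k + 1) u = {u} := by
          ext x
          simp only [Set.mem_singleton_iff, cls, Set.mem_setOf_eq]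
          constructor
          · rintro (rfl | ⟨H, hH, -, hu⟩)
            · rfl
            · exact absurd ⟨H, hH, hu⟩ hex
          · rintro rfl; exact Or.inl rfl
        rw [this, Set.ncard_singleton]
    have hsep : ∀ H : G.Subgraph, KEdgeConnSub G H (k + 1) → ∀ T₁ ∈ 𝒞, ∀ T₂ ∈ 𝒞,
        (H.verts ∩ T₁).Nonempty → (H.verts ∩ T₂).Nonempty → T₁ = T₂ := by
      intro H hH T₁ h₁ T₂ h₂ ⟨x, hx⟩ ⟨y, hy⟩
      obtain ⟨u₁, -, rfl⟩ := hmem𝒞 T₁ h₁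
      obtain ⟨u₂, -, rfl⟩ := hmem𝒞 T₂ h₂
      have hxy : Rel G (k + 1) y x := ⟨H, hH, hy.1, hx.1⟩
      rw [← cls_eq_of_mem hx.2, ← cls_eq_of_mem hy.2]
      exact (cls_eq_of_mem (Or.inr hxy)).symm
    -- partition of the edge set
    have hedges : edgesIn G S = 𝒞.biUnion (fun T => edgesIn G T) ∪ crossE G 𝒞 := by
      ext e
      induction e using Sym2.ind with
      | _ a b =>
        simp only [Finset.mem_union, Finset.mem_biUnion, mem_edgesIn, mem_crossE]
        constructor
        · rintro ⟨he, hall⟩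
          have ha : a ∈ S := hall a (Sym2.mem_mk_left a b)
          have hb : b ∈ S := hall b (Sym2.mem_mk_right a b)
          by_cases hsame : cls G (k + 1) a = cls G (k + 1) b
          · refine Or.inl ⟨cls G (k + 1) a, hclsS a ha, he, ?_⟩
            intro x hx
            rcases Sym2.mem_iff.mp hx with rfl | rfl
            · exact mem_cls_self _ _
            · rw [hsame]; exact mem_cls_self _ _
          · exact Or.inr ⟨he, a, b, rfl, cls G (k + 1) a, hclsS a ha, cls G (k + 1) b,
              hclsS b hb, hsame, mem_cls_self _ _, mem_cls_self _ _⟩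
        · rintro (⟨T, hT, he, hall⟩ | ⟨he, x, y, hxy, T₁, h₁, T₂, h₂, -, hx, hy⟩)
          · exact ⟨he, fun x hx => hTsubS T hT (hall x hx)⟩
          · refine ⟨he, ?_⟩
            intro z hz
            rw [hxy, Sym2.mem_iff] at hz
            rcases hz with rfl | rfl
            · exact hTsubS T₁ h₁ hx
            · exact hTsubS T₂ h₂ hy
    have hdisjU : Disjoint (𝒞.biUnion (fun T => edgesIn G T)) (crossE G 𝒞) := by
      rw [Finset.disjoint_left]
      intro e he1 he2
      rw [Finset.mem_biUnion] at he1
      obtain ⟨T, hT, heT⟩ := he1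
      rw [mem_crossE] at he2
      obtain ⟨-, a, b, rfl, T₁, h₁, T₂, h₂, hne12, ha, hb⟩ := he2
      rw [mem_edgesIn] at heT
      have haT : a ∈ T := heT.2 a (Sym2.mem_mk_left a b)
      have hbT : b ∈ T := heT.2 b (Sym2.mem_mk_right a b)
      have e1 : T = T₁ := by
        by_contra hne'
        exact (hdisj T hT T₁ h₁ hne').ne_of_mem haT ha rfl
      have e2 : T = T₂ := by
        by_contra hne'
        exact (hdisj T hT T₂ h₂ hne').ne_of_mem hbT hb rfl
      exact hne12 (e1 ▸ e2)
    have hpd : ∀ T₁ ∈ 𝒞, ∀ T₂ ∈ 𝒞, T₁ ≠ T₂ →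
        Disjoint (edgesIn G T₁) (edgesIn G T₂) := by
      intro T₁ h₁ T₂ h₂ hne12
      rw [Finset.disjoint_left]
      intro e he1 he2
      rw [mem_edgesIn] at he1 he2
      induction e using Sym2.ind with
      | _ a b =>
        have h1 := he1.2 a (Sym2.mem_mk_left a b)
        have h2 := he2.2 a (Sym2.mem_mk_left a b)
        exact (hdisj T₁ h₁ T₂ h₂ hne12).ne_of_mem h1 h2 rfl
    -- cardinalities
    have hSne : S.Nonempty := ⟨v, mem_cls_self _ _⟩
    have h𝒞ne : 𝒞.Nonempty := ⟨cls G (k + 1) v, hclsS v (mem_cls_self _ _)⟩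
    have hcard1 : 1 ≤ 𝒞.card := Finset.card_pos.mpr h𝒞ne
    have hncards : ∑ T ∈ 𝒞, (T.ncard : ℝ) = (S.ncard : ℝ) := by
      have hfin : (Set.toFinite S).toFinset = 𝒞.biUnion (fun T => (Set.toFinite T).toFinset) := by
        ext x
        simp only [Set.Finite.mem_toFinset, Finset.mem_biUnion]
        constructor
        · intro hx
          exact ⟨cls G (k + 1) x, hclsS x hx, mem_cls_self _ _⟩
        · rintro ⟨T, hT, hx⟩
          exact hTsubS T hT hx
      have hcardeq : S.ncard = ∑ T ∈ 𝒞, T.ncard := by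
        rw [Set.ncard_eq_toFinset_card S (Set.toFinite S), hfin, Finset.card_biUnion]
        · exact Finset.sum_congr rfl fun T hT =>
            (Set.ncard_eq_toFinset_card T (Set.toFinite T)).symm
        · intro T₁ h₁ T₂ h₂ hne12
          rw [Function.onFun, Finset.disjoint_left]
          intro x hx1 hx2
          rw [Set.Finite.mem_toFinset] at hx1 hx2
          exact (hdisj T₁ h₁ T₂ h₂ hne12).ne_of_mem hx1 hx2 rfl
      rw [hcardeq]
      push_cast
      rfl
    -- the inner sums
    have hinner : ∑ T ∈ 𝒞, ∑ e ∈ edgesIn G T, (1 / (strength G e : ℝ)) ≤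
        (S.ncard : ℝ) - 𝒞.card := by
      have : ∀ T ∈ 𝒞, ∑ e ∈ edgesIn G T, (1 / (strength G e : ℝ)) ≤ (T.ncard : ℝ) - 1 := by
        intro T hT
        obtain ⟨u, -, rfl⟩ := hmem𝒞 T hT
        exact ih (k + 1) u (by omega)
      refine le_trans (Finset.sum_le_sum this) ?_
      rw [Finset.sum_sub_distrib, hncards]
      simp
    -- the crossing edges
    have hcrosscard : (crossE G 𝒞).card ≤ k * (𝒞.card - 1) :=
      mader 𝒞.card k 𝒞 le_rfl (fun T hT => by
          obtain ⟨u, -, rfl⟩ := hmem𝒞 T hT; exact ⟨u, mem_cls_self _ _⟩)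
        hdisj hgood hsep
    have hcross : ∑ e ∈ crossE G 𝒞, (1 / (strength G e : ℝ)) ≤ (𝒞.card : ℝ) - 1 := by
      rcases Nat.eq_zero_or_pos k with rfl | hkpos
      · have : crossE G 𝒞 = ∅ := by
          rw [← Finset.card_eq_zero]
          omega
        rw [this]
        simp only [Finset.sum_empty]
        have : (1 : ℝ) ≤ 𝒞.card := by exact_mod_cast hcard1
        linarith
      · have hterm : ∀ e ∈ crossE G 𝒞, (1 / (strength G e : ℝ)) ≤ 1 / k := by
          intro e he
          rw [mem_crossE] at he
          obtain ⟨heE, a, b, rfl, T₁, h₁, T₂, h₂, -, ha, hb⟩ := he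
          have haS : a ∈ S := hTsubS T₁ h₁ ha
          have hbS : b ∈ S := hTsubS T₂ h₂ hb
          have hadj : G.Adj a b := (SimpleGraph.mem_edgeSet G).mp heE
          have hrel : Rel G k a b := rel_of_mem_cls haS hbS (G.ne_of_adj hadj)
          have hks : k ≤ strength G s(a, b) := strength_ge_of_rel hadj hrel
          apply one_div_le_one_div_of_le
          · exact_mod_cast hkpos
          · exact_mod_cast hks
        refine le_trans (Finset.sum_le_sum hterm) ?_
        rw [Finset.sum_const, nsmul_eq_mul]
        rw [div_eq_mul_inv, ← mul_assoc]
        rw [← div_eq_mul_inv]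
        rw [div_le_iff₀ (by exact_mod_cast hkpos)]
        have : ((crossE G 𝒞).card : ℝ) ≤ (k : ℝ) * ((𝒞.card : ℝ) - 1) := by
          calc ((crossE G 𝒞).card : ℝ) ≤ ((k * (𝒞.card - 1) : ℕ) : ℝ) := by
                exact_mod_cast hcrosscard
            _ = (k : ℝ) * ((𝒞.card : ℝ) - 1) := by
                push_cast [Nat.cast_sub hcard1]
                ring
        calc ((crossE G 𝒞).card : ℝ) * 1 = ((crossE G 𝒞).card : ℝ) := by ring
          _ ≤ (k : ℝ) * ((𝒞.card : ℝ) - 1) := this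
          _ = ((𝒞.card : ℝ) - 1) * (k : ℝ) := by ring
    -- put it together
    rw [hedges, Finset.sum_union hdisjU, Finset.sum_biUnion hpd]
    have hc1 : (1 : ℝ) ≤ 𝒞.card := by exact_mod_cast hcard1
    linarith

end StrengthProof

/-- For any finite graph `G` on `n ≥ 1` vertices, `∑_{e ∈ E(G)} 1 / s_e ≤ n - 1`. -/
theorem sum_inv_strength_le [Fintype V] [Nonempty V] (G : SimpleGraph V) :
    ∑ e ∈ (Set.toFinite G.edgeSet).toFinset, (1 / (strength G e : ℝ)) ≤
      (Fintype.card V : ℝ) - 1 := by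

  obtain ⟨v⟩ := ‹Nonempty V›
  have hcls : StrengthProof.cls G 0 v = Set.univ := by
    ext u
    simp only [Set.mem_univ, iff_true, StrengthProof.cls, Set.mem_setOf_eq]
    by_cases h : u = v
    · exact Or.inl h
    · refine Or.inr ⟨⟨{u, v}, fun _ _ => False, fun hf => hf.elim, fun hf => hf.elim,
        ⟨fun _ _ hf => hf⟩⟩, ⟨?_, fun A _ _ _ => Nat.zero_le _⟩, by simp, by simp⟩
      rw [Set.ncard_pair h]
  have hmain := StrengthProof.main_lemma (G := G) (G.edgeSet.ncard + 1) 0 v (by omega)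
  have hE : StrengthProof.edgesIn G (StrengthProof.cls G 0 v) =
      (Set.toFinite G.edgeSet).toFinset := by
    ext e
    rw [StrengthProof.mem_edgesIn, Set.Finite.mem_toFinset, hcls]
    simp
  rw [hE, hcls, Set.ncard_univ, Nat.card_eq_fintype_card] at hmain
  exact hmain
end
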